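/- arXiv:2011.14893 — 2 statements merged into one kernel-verified Lean document; each statement's English description precedes it below -/
import Mathlib

section
/- If X, Y are i.i.d. Gamma(b^(−1)x + 1, b) random variables with x, b > 0, then E[min{X,Y} − x] = b(x/b + 1) − (b/√π) · Γ(x/b + 3/2)/Γ(x/b + 1) − x, and as b → 0⁺ this quantity equals −√(bx/π) + b + O_x(b^(3/2)). -/
open MeasureTheory ProbabilityTheory Real

set_option linter.unusedVariables false

section helpers
open Set Filter Topology intervalIntegral

lemma real_beta (a : ℝ) (ha : 0 < a) :
    ∫ v in (0:ℝ)..1, v ^ (a-1) * (1-v) ^ (a-1) = Gamma a ^ 2 / Gamma (2*a) := by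
  have h2a : (0:ℝ) < 2 * a := by linarith
  have hC := Complex.Gamma_mul_Gamma_eq_betaIntegral (s := (a:ℂ)) (t := (a:ℂ))
    (by simpa using ha) (by simpa using ha)
  have hbeta : Complex.betaIntegral (a:ℂ) (a:ℂ)
      = ((∫ v in (0:ℝ)..1, v ^ (a-1) * (1-v) ^ (a-1) : ℝ) : ℂ) := by
    rw [Complex.betaIntegral, ← intervalIntegral.integral_ofReal]
    refine intervalIntegral.integral_congr_ae ?_
    filter_upwards with x hx
    rw [Set.uIoc_of_le (by norm_num : (0:ℝ) ≤ 1)] at hx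
    rw [show ((a:ℂ)-1) = ((a-1:ℝ):ℂ) by push_cast; ring,
      show ((1:ℂ)-(x:ℂ)) = ((1-x:ℝ):ℂ) by push_cast; ring,
      ← Complex.ofReal_cpow hx.1.le, ← Complex.ofReal_cpow (by linarith [hx.2] : (0:ℝ) ≤ 1-x),
      ← Complex.ofReal_mul]
  rw [hbeta, Complex.Gamma_ofReal,
    show ((a:ℂ) + a) = ((2*a : ℝ) : ℂ) by push_cast; ring, Complex.Gamma_ofReal] at hC
  have h3 : Gamma a * Gamma a
      = Gamma (2*a) * ∫ v in (0:ℝ)..1, v ^ (a-1) * (1-v) ^ (a-1) := by exact_mod_cast hC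
  have hG : Real.Gamma (2*a) ≠ 0 := (Real.Gamma_pos_of_pos h2a).ne'
  rw [eq_div_iff hG]
  linear_combination -h3

lemma J_sub {a : ℝ} (ha : 1 < a) :
    ∫ w in Ioi (1:ℝ), w ^ (a-1) * (1+w) ^ (-(2*a+1))
      = ∫ v in Ioo (1/2:ℝ) 1, v ^ (a-1) * (1-v) ^ a := by
  have himg : (fun v : ℝ => v / (1 - v)) '' Ioo (1/2:ℝ) 1 = Ioi 1 := by
    ext y; constructor
    · rintro ⟨v, ⟨h1, h2⟩, rfl⟩
      have h3 : 0 < 1 - v := by linarith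
      rw [mem_Ioi, lt_div_iff₀ h3]; linarith
    · intro hy
      rw [mem_Ioi] at hy
      refine ⟨y / (1 + y), ⟨?_, ?_⟩, ?_⟩
      · rw [lt_div_iff₀ (by linarith : (0:ℝ) < 1 + y)]; linarith
      · rw [div_lt_one (by linarith : (0:ℝ) < 1 + y)]; linarith
      · have h1y : (1:ℝ) + y ≠ 0 := by positivity
        field_simp; ring
  have hderiv : ∀ v ∈ Ioo (1/2:ℝ) 1,
      HasDerivWithinAt (fun v : ℝ => v / (1 - v)) (((1-v)^2)⁻¹) (Ioo (1/2:ℝ) 1) v := by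
    intro v hv
    have h3 : (1:ℝ) - v ≠ 0 := ne_of_gt (by linarith [hv.2])
    have := (hasDerivAt_id v).div ((hasDerivAt_const v (1:ℝ)).sub (hasDerivAt_id v)) h3
    refine this.hasDerivWithinAt.congr_deriv ?_
    simp only [Pi.sub_apply, id_eq]
    rw [show (1:ℝ) * (1 - v) - v * (0 - 1) = 1 by ring, one_div]
  have hinj : InjOn (fun v : ℝ => v / (1 - v)) (Ioo (1/2:ℝ) 1) := by
    intro u hu v hv h
    have hu3 : (1:ℝ) - u ≠ 0 := ne_of_gt (by linarith [hu.2])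
    have hv3 : (1:ℝ) - v ≠ 0 := ne_of_gt (by linarith [hv.2])
    field_simp at h
    linarith
  rw [← himg, integral_image_eq_integral_abs_deriv_smul measurableSet_Ioo hderiv hinj]
  refine setIntegral_congr_fun measurableSet_Ioo fun v hv => ?_
  have hv1 : (0:ℝ) < v := lt_trans (by norm_num) hv.1
  have hv2 : (0:ℝ) < 1 - v := by linarith [hv.2]
  have e1 : 1 + v/(1-v) = (1-v)⁻¹ := by field_simp; ring
  have e2 : ((1-v)⁻¹ : ℝ) ^ (-(2*a+1)) = (1-v) ^ (2*a+1) := by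
    rw [← Real.rpow_neg_one (1-v), ← Real.rpow_mul hv2.le]; norm_num
  have e3 : ((((1:ℝ)-v))^2)⁻¹ = (1-v) ^ (-2:ℝ) := by
    rw [← Real.rpow_natCast (1-v) 2, ← Real.rpow_neg hv2.le]; norm_num
  rw [smul_eq_mul, e1, abs_of_pos (by positivity), e2, e3,
    div_rpow hv1.le hv2.le, div_eq_mul_inv, ← Real.rpow_neg hv2.le]
  calc (1-v)^(-2:ℝ) * (v^(a-1) * (1-v)^(-(a-1)) * (1-v)^(2*a+1))
      = v^(a-1) * ((1-v)^(-2:ℝ) * (1-v)^(-(a-1)) * (1-v)^(2*a+1)) := by ring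
    _ = v^(a-1) * (1-v)^a := by
        rw [← Real.rpow_add hv2, ← Real.rpow_add hv2]
        congr 1
        ring

lemma cont_rpow {p : ℝ} (hp : 0 ≤ p) : Continuous fun v : ℝ => v ^ p :=
  continuous_iff_continuousAt.mpr fun x => Real.continuousAt_rpow_const x p (Or.inr hp)

lemma cont_rpow' {p : ℝ} (hp : 0 ≤ p) : Continuous fun v : ℝ => (1-v) ^ p :=
  (cont_rpow hp).comp (continuous_const.sub continuous_id)

lemma A_eval {a : ℝ} (ha : 1 < a) :
    ∫ v in Ioo (1/2:ℝ) 1, v ^ (a-1) * (1-v) ^ a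
      = Gamma a ^ 2 / (4 * Gamma (2*a)) - (2:ℝ) ^ (-2*a) / (2*a) := by
  have ha0 : (0:ℝ) < a := by linarith
  have ha1 : (0:ℝ) ≤ a - 1 := by linarith
  have c1 : Continuous fun v : ℝ => v ^ (a-1) * (1-v) ^ a := (cont_rpow ha1).mul (cont_rpow' ha0.le)
  have c2 : Continuous fun v : ℝ => v ^ a * (1-v) ^ (a-1) := (cont_rpow ha0.le).mul (cont_rpow' ha1)
  have c3 : Continuous fun v : ℝ => v ^ (a-1) * (1-v) ^ (a-1) := (cont_rpow ha1).mul (cont_rpow' ha1)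
  -- FTC on [1/2, 1]
  have hd : ∀ v ∈ uIcc (1/2:ℝ) 1, HasDerivAt (fun v : ℝ => v ^ a * (1-v) ^ a)
      (a * (v ^ (a-1) * (1-v) ^ a) - a * (v ^ a * (1-v) ^ (a-1))) v := by
    intro v _
    have h1 : HasDerivAt (fun v : ℝ => v ^ a) (a * v ^ (a-1)) v :=
      Real.hasDerivAt_rpow_const (Or.inr ha.le)
    have h2 : HasDerivAt (fun v : ℝ => (1-v) ^ a) (a * (1-v) ^ (a-1) * (0-1)) v :=
      (Real.hasDerivAt_rpow_const (Or.inr ha.le)).comp v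
        ((hasDerivAt_const v (1:ℝ)).sub (hasDerivAt_id v))
    exact (h1.mul h2).congr_deriv (by ring)
  have hftc := intervalIntegral.integral_eq_sub_of_hasDerivAt hd
    ((((continuous_const.mul c1)).sub ((continuous_const.mul c2))).intervalIntegrable _ _)
  have hval : ((1:ℝ) ^ a * (1-1) ^ a) - ((1/2:ℝ) ^ a * (1-1/2) ^ a) = -(2:ℝ) ^ (-2*a) := by
    rw [one_rpow, sub_self, Real.zero_rpow ha0.ne', show (1:ℝ)-1/2 = 1/2 by norm_num,
      ← Real.rpow_add (by norm_num : (0:ℝ) < 1/2),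
      show (1/2:ℝ) = 2⁻¹ by norm_num, Real.inv_rpow (by norm_num : (0:ℝ) ≤ 2),
      ← Real.rpow_neg (by norm_num : (0:ℝ) ≤ 2)]
    ring_nf
  rw [hval] at hftc
  have hsplit : ∫ v in (1/2:ℝ)..1, (a * (v ^ (a-1) * (1-v) ^ a) - a * (v ^ a * (1-v) ^ (a-1)))
      = a * ((∫ v in (1/2:ℝ)..1, v ^ (a-1) * (1-v) ^ a)
          - ∫ v in (1/2:ℝ)..1, v ^ a * (1-v) ^ (a-1)) := by
    rw [intervalIntegral.integral_sub ((c1.intervalIntegrable _ _).const_mul a)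
      ((c2.intervalIntegrable _ _).const_mul a),
      intervalIntegral.integral_const_mul, intervalIntegral.integral_const_mul]
    ring
  have hAB : (∫ v in (1/2:ℝ)..1, v ^ (a-1) * (1-v) ^ a)
      - (∫ v in (1/2:ℝ)..1, v ^ a * (1-v) ^ (a-1)) = -(2:ℝ) ^ (-2*a) / a := by
    rw [hsplit] at hftc
    field_simp at hftc ⊢
    linarith
  -- symmetry
  have hsym : ∫ v in (1/2:ℝ)..1, v ^ (a-1) * (1-v) ^ (a-1)
      = ∫ v in (0:ℝ)..(1/2), v ^ (a-1) * (1-v) ^ (a-1) := by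
    have hs := intervalIntegral.integral_comp_sub_left (a := (1/2:ℝ)) (b := 1)
      (fun v => v ^ (a-1) * (1-v) ^ (a-1)) 1
    rw [show (1:ℝ)-1 = 0 by norm_num, show (1:ℝ)-1/2 = 1/2 by norm_num] at hs
    rw [← hs]
    refine intervalIntegral.integral_congr fun v _ => ?_
    simp only [sub_sub_cancel]
    ring
  have hadd := intervalIntegral.integral_add_adjacent_intervals
    (a := (0:ℝ)) (b := (1/2:ℝ)) (c := (1:ℝ)) (μ := volume)
    (c3.intervalIntegrable _ _) (c3.intervalIntegrable _ _)
  have hbeta : ∫ v in (0:ℝ)..1, v ^ (a-1) * (1-v) ^ (a-1) = Gamma a ^ 2 / Gamma (2*a) :=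
    real_beta a (by linarith)
  have hH : ∫ v in (1/2:ℝ)..1, v ^ (a-1) * (1-v) ^ (a-1) = (Gamma a ^ 2 / Gamma (2*a))/2 := by
    have h' := hadd
    rw [hbeta] at h'
    linarith [hsym, h']
  -- pointwise sum identity on Ioo
  have hsum : ∫ v in (1/2:ℝ)..1, v ^ (a-1) * (1-v) ^ (a-1)
      = (∫ v in (1/2:ℝ)..1, v ^ (a-1) * (1-v) ^ a)
        + ∫ v in (1/2:ℝ)..1, v ^ a * (1-v) ^ (a-1) := by
    rw [← intervalIntegral.integral_add (c1.intervalIntegrable _ _) (c2.intervalIntegrable _ _)]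
    rw [intervalIntegral.integral_of_le (by norm_num : (1/2:ℝ) ≤ 1),
      intervalIntegral.integral_of_le (by norm_num : (1/2:ℝ) ≤ 1),
      MeasureTheory.integral_Ioc_eq_integral_Ioo, MeasureTheory.integral_Ioc_eq_integral_Ioo]
    refine setIntegral_congr_fun measurableSet_Ioo fun v hv => ?_
    have hv1 : (0:ℝ) < v := lt_trans (by norm_num) hv.1
    have hv2 : (0:ℝ) < 1 - v := by linarith [hv.2]
    have e1 : v ^ a = v ^ (a-1) * v := by
      rw [← Real.rpow_add_one hv1.ne' (a-1)]; norm_num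
    have e2 : (1-v) ^ a = (1-v) ^ (a-1) * (1-v) := by
      rw [← Real.rpow_add_one hv2.ne' (a-1)]; norm_num
    rw [e1, e2]; ring
  have hIoo : ∫ v in Ioo (1/2:ℝ) 1, v ^ (a-1) * (1-v) ^ a
      = ∫ v in (1/2:ℝ)..1, v ^ (a-1) * (1-v) ^ a := by
    rw [intervalIntegral.integral_of_le (by norm_num : (1/2:ℝ) ≤ 1),
      MeasureTheory.integral_Ioc_eq_integral_Ioo]
  rw [hIoo, show Gamma a ^ 2/(4*Gamma (2*a)) = (Gamma a ^ 2/Gamma (2*a))/4 by ring,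
    show (2:ℝ)^(-2*a)/(2*a) = ((2:ℝ)^(-2*a)/a)/2 by ring]
  have h2 := hH
  rw [hsum] at h2
  rw [show -(2:ℝ)^(-2*a)/a = -((2:ℝ)^(-2*a)/a) by ring] at hAB
  linarith [hAB, h2]


section gammaFacts
variable {a r : ℝ} (ha : 1 < a) (hr : 0 < r)

lemma gpdf_eq (ha : 1 < a) (hr : 0 < r) : gammaPDFReal a r
    = fun x => r ^ a / Gamma a * ((max x 0) ^ (a-1) * exp (-(r * x))) := by
  funext x
  unfold gammaPDFReal
  rcases le_or_gt 0 x with h | h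
  · rw [if_pos h, max_eq_left h]; ring
  · rw [if_neg (not_le.mpr h), max_eq_right h.le,
      Real.zero_rpow (by linarith : a - 1 ≠ 0)]
    ring

lemma gpdf_cont (ha : 1 < a) (hr : 0 < r) : Continuous (gammaPDFReal a r) := by
  rw [gpdf_eq ha hr]
  exact continuous_const.mul (((cont_rpow (by linarith)).comp
    (continuous_id.max continuous_const)).mul ((continuous_const.mul continuous_id).neg.rexp))

lemma gpdf_integrable (ha : 1 < a) (hr : 0 < r) : Integrable (gammaPDFReal a r) := by
  refine ⟨(gpdf_cont ha hr).aestronglyMeasurable, ?_⟩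
  rw [hasFiniteIntegral_iff_ofReal (ae_of_all _ (gammaPDFReal_nonneg (by linarith) hr))]
  have : (fun x => ENNReal.ofReal (gammaPDFReal a r x)) = gammaPDF a r := rfl
  rw [this, lintegral_gammaPDF_eq_one (by linarith : (0:ℝ) < a) hr]
  exact ENNReal.one_lt_top

lemma gpdf_total (ha : 1 < a) (hr : 0 < r) : ∫ x, gammaPDFReal a r x = 1 := by
  have h0 : 0 ≤ᵐ[(volume : Measure ℝ)] gammaPDFReal a r :=
    ae_of_all _ (gammaPDFReal_nonneg (by linarith) hr)
  have := ofReal_integral_eq_lintegral_ofReal (gpdf_integrable ha hr) h0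
  have h1 : (fun x => ENNReal.ofReal (gammaPDFReal a r x)) = gammaPDF a r := rfl
  rw [h1, lintegral_gammaPDF_eq_one (by linarith : (0:ℝ) < a) hr] at this
  have h2 : 0 ≤ ∫ x, gammaPDFReal a r x := integral_nonneg (gammaPDFReal_nonneg (by linarith) hr)
  rw [← ENNReal.ofReal_one] at this
  exact (ENNReal.ofReal_eq_ofReal_iff h2 zero_le_one).mp this

/-- moment-type integral -/
lemma grInt {d : ℝ} (hd : 0 < d) (hr : 0 < r) :
    IntegrableOn (fun t : ℝ => t ^ (d-1) * exp (-(r*t))) (Ioi 0) := by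
  have := integrableOn_rpow_mul_exp_neg_mul_rpow (p := 1) (s := d-1) (b := r)
    (by linarith) one_pos hr
  refine this.congr_fun (fun t ht => ?_) measurableSet_Ioi
  simp only [Real.rpow_one]
  ring_nf
end gammaFacts

section gammaFacts2
variable {a r : ℝ}

lemma grVal {d : ℝ} (hd : 0 < d) (hr : 0 < r) :
    ∫ t in Ioi (0:ℝ), t ^ (d-1) * exp (-(r*t)) = (1/r) ^ d * Gamma d :=
  integral_rpow_mul_exp_neg_mul_Ioi hd hr

lemma momInt {c : ℝ} (ha : 1 < a) (hr : 0 < r) (hc : 0 ≤ c) :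
    IntegrableOn (fun t : ℝ => t ^ c * gammaPDFReal a r t) (Ioi 0) := by
  refine MeasureTheory.IntegrableOn.congr_fun
    (((grInt (d := a + c) (by linarith) hr).const_mul (r ^ a / Gamma a)))
    (fun t ht => ?_) measurableSet_Ioi
  have ht0 : (0:ℝ) < t := ht
  unfold gammaPDFReal
  rw [if_pos ht0.le, show a + c - 1 = c + (a - 1) by ring, Real.rpow_add ht0]
  ring

lemma momVal {c : ℝ} (ha : 1 < a) (hr : 0 < r) (hc : 0 ≤ c) :
    ∫ t in Ioi (0:ℝ), t ^ c * gammaPDFReal a r t = Gamma (a + c) / (Gamma a * r ^ c) := by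
  have h1 : ∫ t in Ioi (0:ℝ), t ^ c * gammaPDFReal a r t
      = ∫ t in Ioi (0:ℝ), (r ^ a / Gamma a) * (t ^ ((a+c)-1) * exp (-(r*t))) := by
    refine setIntegral_congr_fun measurableSet_Ioi (fun t ht => ?_)
    have ht0 : (0:ℝ) < t := ht
    unfold gammaPDFReal
    rw [if_pos ht0.le, show a + c - 1 = c + (a - 1) by ring, Real.rpow_add ht0]
    ring
  rw [h1, MeasureTheory.integral_const_mul, grVal (by linarith) hr]
  have hra : (0:ℝ) < r ^ a := Real.rpow_pos_of_pos hr a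
  have hrc : (0:ℝ) < r ^ c := Real.rpow_pos_of_pos hr c
  have hG : (0:ℝ) < Gamma a := Gamma_pos_of_pos (by linarith)
  rw [one_div, Real.inv_rpow hr.le, Real.rpow_add hr]
  field_simp

lemma M1val (ha : 1 < a) (hr : 0 < r) :
    ∫ t in Ioi (0:ℝ), t * gammaPDFReal a r t = a / r := by
  have h := momVal (c := 1) ha hr zero_le_one
  rw [Real.Gamma_add_one (by linarith : a ≠ 0), Real.rpow_one] at h
  have hG : (0:ℝ) < Gamma a := Gamma_pos_of_pos (by linarith)
  have h2 : ∫ t in Ioi (0:ℝ), t ^ (1:ℝ) * gammaPDFReal a r t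
      = ∫ t in Ioi (0:ℝ), t * gammaPDFReal a r t := by
    refine setIntegral_congr_fun measurableSet_Ioi (fun t ht => ?_)
    rw [Real.rpow_one]
  rw [h2] at h
  rw [h]
  field_simp

lemma M1int (ha : 1 < a) (hr : 0 < r) :
    IntegrableOn (fun t : ℝ => t * gammaPDFReal a r t) (Ioi 0) := by
  refine MeasureTheory.IntegrableOn.congr_fun (momInt (c := 1) ha hr zero_le_one) (fun t ht => ?_) measurableSet_Ioi
  rw [Real.rpow_one]

lemma S_hasDeriv (ha : 1 < a) (hr : 0 < r) (u : ℝ) :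
    HasDerivAt (fun v => ∫ t in Ioi v, gammaPDFReal a r t) (-(gammaPDFReal a r u)) u := by
  have hfi := gpdf_integrable ha hr
  have key : (fun v => ∫ t in Ioi v, gammaPDFReal a r t)
      = fun v => (∫ x, gammaPDFReal a r x) - ((∫ t in Iic (0:ℝ), gammaPDFReal a r t)
          + ∫ t in (0:ℝ)..v, gammaPDFReal a r t) := by
    funext v
    have h1 : (∫ t in Iic v, gammaPDFReal a r t) + ∫ t in Ioi v, gammaPDFReal a r t
        = ∫ x, gammaPDFReal a r x := by
      rw [← compl_Iic]
      exact integral_add_compl measurableSet_Iic hfi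
    have h2 : (∫ t in Iic v, gammaPDFReal a r t) - (∫ t in Iic (0:ℝ), gammaPDFReal a r t)
        = ∫ t in (0:ℝ)..v, gammaPDFReal a r t := by
      rw [intervalIntegral.integral_Iic_sub_Iic (hfi.integrableOn) (hfi.integrableOn)]
    linarith
  rw [key]
  have hftc : HasDerivAt (fun v => ∫ t in (0:ℝ)..v, gammaPDFReal a r t)
      (gammaPDFReal a r u) u :=
    intervalIntegral.integral_hasDerivAt_right hfi.intervalIntegrable
      ((gpdf_cont ha hr).stronglyMeasurableAtFilter _ _) (gpdf_cont ha hr).continuousAt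
  simpa using ((hftc.const_add (∫ t in Iic (0:ℝ), gammaPDFReal a r t)).const_sub
    (∫ x, gammaPDFReal a r x))

lemma S_cont (ha : 1 < a) (hr : 0 < r) :
    Continuous (fun v => ∫ t in Ioi v, gammaPDFReal a r t) :=
  continuous_iff_continuousAt.mpr fun u => (S_hasDeriv ha hr u).continuousAt

lemma S_nonneg (ha : 1 < a) (hr : 0 < r) (u : ℝ) :
    0 ≤ ∫ t in Ioi u, gammaPDFReal a r t :=
  setIntegral_nonneg measurableSet_Ioi fun t _ => gammaPDFReal_nonneg (by linarith) hr t

lemma S_le_one (ha : 1 < a) (hr : 0 < r) (u : ℝ) :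
    (∫ t in Ioi u, gammaPDFReal a r t) ≤ 1 := by
  rw [← gpdf_total ha hr]
  exact setIntegral_le_integral (gpdf_integrable ha hr)
    (ae_of_all _ fun t => gammaPDFReal_nonneg (by linarith) hr t)

lemma S_markov (ha : 1 < a) (hr : 0 < r) {u : ℝ} (hu : 0 < u) :
    (∫ t in Ioi u, gammaPDFReal a r t) ≤ a / r / u := by
  have hfi := gpdf_integrable ha hr
  have h1 : u * ∫ t in Ioi u, gammaPDFReal a r t
      = ∫ t in Ioi u, u * gammaPDFReal a r t := (MeasureTheory.integral_const_mul u _).symm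
  have h2 : (∫ t in Ioi u, u * gammaPDFReal a r t) ≤ ∫ t in Ioi u, t * gammaPDFReal a r t := by
    refine setIntegral_mono_on (hfi.integrableOn.const_mul u)
      ((M1int ha hr).mono_set (Ioi_subset_Ioi hu.le)) measurableSet_Ioi (fun t ht => ?_)
    exact mul_le_mul_of_nonneg_right (le_of_lt ht) (gammaPDFReal_nonneg (by linarith) hr t)
  have h3 : (∫ t in Ioi u, t * gammaPDFReal a r t) ≤ ∫ t in Ioi (0:ℝ), t * gammaPDFReal a r t := by
    refine setIntegral_mono_set (M1int ha hr) ?_ (HasSubset.Subset.eventuallyLE (Ioi_subset_Ioi hu.le))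
    filter_upwards [ae_restrict_mem measurableSet_Ioi] with t ht
    exact mul_nonneg (le_of_lt ht) (gammaPDFReal_nonneg (by linarith) hr t)
  rw [M1val ha hr] at h3
  rw [div_div]
  rw [le_div_iff₀ (by positivity : (0:ℝ) < r * u)]
  have := h1 ▸ (h2.trans h3)
  calc (∫ t in Ioi u, gammaPDFReal a r t) * (r * u)
      = (u * ∫ t in Ioi u, gammaPDFReal a r t) * r := by ring
    _ ≤ (a / r) * r := by
        refine mul_le_mul_of_nonneg_right ?_ hr.le
        linarith [this]
    _ = a := by field_simp
  
lemma S_tendsto (ha : 1 < a) (hr : 0 < r) :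
    Tendsto (fun v => ∫ t in Ioi v, gammaPDFReal a r t) atTop (𝓝 0) := by
  refine squeeze_zero' (Eventually.of_forall fun u => S_nonneg ha hr u)
    (eventually_atTop.mpr ⟨1, fun u hu => S_markov ha hr (by linarith)⟩) ?_
  simpa using tendsto_const_nhds.div_atTop (tendsto_id (α := ℝ))

lemma IntS2 (ha : 1 < a) (hr : 0 < r) :
    IntegrableOn (fun u => (∫ t in Ioi u, gammaPDFReal a r t) ^ 2) (Ioi (0:ℝ)) := by
  rw [← Ioc_union_Ioi_eq_Ioi (zero_le_one' ℝ)]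
  refine IntegrableOn.union ?_ ?_
  · exact (((S_cont ha hr).pow 2).continuousOn).integrableOn_compact isCompact_Icc
      |>.mono_set Ioc_subset_Icc_self
  · refine Integrable.mono' (g := fun u : ℝ => (a/r)^2 * u ^ (-2:ℝ))
      ((integrableOn_Ioi_rpow_of_lt (by norm_num) one_pos).const_mul _)
      (((S_cont ha hr).pow 2).aestronglyMeasurable.restrict) ?_
    filter_upwards [ae_restrict_mem measurableSet_Ioi] with u hu
    have hu1 : (1:ℝ) < u := hu
    have hu0 : (0:ℝ) < u := by linarith
    have hm := S_markov ha hr hu0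
    have hnn := S_nonneg ha hr u
    rw [norm_of_nonneg (by positivity)]
    have h1 : (∫ t in Ioi u, gammaPDFReal a r t) ^ 2 ≤ (a/r/u)^2 := by
      exact pow_le_pow_left₀ hnn hm 2
    refine h1.trans (le_of_eq ?_)
    rw [div_pow, Real.rpow_neg hu0.le, show ((2:ℝ)) = ((2:ℕ):ℝ) by norm_num,
      Real.rpow_natCast]
    field_simp

lemma IntufS (ha : 1 < a) (hr : 0 < r) :
    IntegrableOn (fun u => u * gammaPDFReal a r u * ∫ t in Ioi u, gammaPDFReal a r t)
      (Ioi (0:ℝ)) := by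
  refine Integrable.mono' (g := fun u : ℝ => u * gammaPDFReal a r u) (M1int ha hr)
    ((continuous_id.mul (gpdf_cont ha hr)).mul (S_cont ha hr)).aestronglyMeasurable.restrict ?_
  filter_upwards [ae_restrict_mem measurableSet_Ioi] with u hu
  have hu0 : (0:ℝ) < u := hu
  have hf0 := gammaPDFReal_nonneg (show (0:ℝ) < a by linarith) hr u
  have hnn := S_nonneg ha hr u
  have hle := S_le_one ha hr u
  rw [norm_of_nonneg (by positivity)]
  calc u * gammaPDFReal a r u * ∫ t in Ioi u, gammaPDFReal a r t
      ≤ u * gammaPDFReal a r u * 1 := by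
        exact mul_le_mul_of_nonneg_left hle (by positivity)
    _ = u * gammaPDFReal a r u := by ring

lemma IBP (ha : 1 < a) (hr : 0 < r) :
    ∫ u in Ioi (0:ℝ), (∫ t in Ioi u, gammaPDFReal a r t) ^ 2
      = 2 * ∫ u in Ioi (0:ℝ), u * gammaPDFReal a r u * ∫ t in Ioi u, gammaPDFReal a r t := by
  set S := fun v => ∫ t in Ioi v, gammaPDFReal a r t with hS
  set f := gammaPDFReal a r with hf
  have hg : ∀ u ∈ Ioi (0:ℝ), HasDerivAt (fun v => v * (S v)^2)
      ((S u)^2 - 2*(u * f u * S u)) u := by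
    intro u _
    have h1 : HasDerivAt (fun v => (S v)^2) (2 * S u ^ 1 * (-(f u))) u :=
      (S_hasDeriv ha hr u).pow 2
    have := (hasDerivAt_id u).mul h1
    exact this.congr_deriv (by simp only [id_eq]; ring)
  have hcont0 : ContinuousWithinAt (fun v => v * (S v)^2) (Ici 0) 0 :=
    (continuous_id.mul ((S_cont ha hr).pow 2)).continuousWithinAt
  have hlim : Tendsto (fun v => v * (S v)^2) atTop (𝓝 0) := by
    refine squeeze_zero' (g := fun v => (a/r) * S v) ?_ ?_ ?_
    · filter_upwards [eventually_gt_atTop 0] with v hv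
      exact mul_nonneg hv.le (sq_nonneg _)
    · filter_upwards [eventually_gt_atTop 0] with v hv
      have h1 : v * S v ≤ a/r := by
        have hm := S_markov ha hr hv
        have h2 := mul_le_mul_of_nonneg_left hm hv.le
        calc v * S v ≤ v * (a/r/v) := h2
          _ = a/r := by field_simp
      calc v * S v ^2 = (v * S v) * S v := by ring
        _ ≤ (a/r) * S v := mul_le_mul_of_nonneg_right h1 (S_nonneg ha hr v)
    · have := (S_tendsto ha hr).const_mul (a/r)
      simpa using this
  have hint : IntegrableOn (fun u => (S u)^2 - 2*(u * f u * S u)) (Ioi (0:ℝ)) :=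
    (IntS2 ha hr).sub ((IntufS ha hr).const_mul 2)
  have hkey := integral_Ioi_of_hasDerivAt_of_tendsto hcont0 hg hint hlim
  rw [show (0:ℝ) * (S 0)^2 = 0 by ring, sub_zero] at hkey
  rw [MeasureTheory.integral_sub (IntS2 ha hr) ((IntufS ha hr).const_mul 2)] at hkey
  have h2 : ∫ u in Ioi (0:ℝ), 2 * (u * f u * S u) = 2 * ∫ u in Ioi (0:ℝ), u * f u * S u :=
    MeasureTheory.integral_const_mul 2 _
  linarith [hkey, h2]

lemma S_scale (ha : 1 < a) (hr : 0 < r) {u : ℝ} (hu : 0 < u) :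
    (∫ t in Ioi u, gammaPDFReal a r t) = u * ∫ w in Ioi 1, gammaPDFReal a r (u * w) := by
  have h := MeasureTheory.integral_comp_mul_left_Ioi (gammaPDFReal a r) 1 hu
  rw [mul_one, smul_eq_mul] at h
  rw [h]
  field_simp


lemma Teval (ha : 1 < a) (hr : 0 < r) :
    ∫ u in Ioi (0:ℝ), u * gammaPDFReal a r u * ∫ t in Ioi u, gammaPDFReal a r t
      = (Gamma (2*a+1) / (r * Gamma a ^ 2))
          * ∫ w in Ioi (1:ℝ), w ^ (a-1) * (1+w) ^ (-(2*a+1)) := by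
  set f := gammaPDFReal a r with hfdef
  have ha0 : (0:ℝ) < a := by linarith
  have hfc := gpdf_cont ha hr
  have hfi := gpdf_integrable ha hr
  have hf0 : ∀ t, 0 ≤ f t := gammaPDFReal_nonneg ha0 hr
  -- step 1: rewrite as iterated integral
  have h1 : ∫ u in Ioi (0:ℝ), u * f u * ∫ t in Ioi u, f t
      = ∫ u in Ioi (0:ℝ), ∫ w in Ioi (1:ℝ), u^2 * f u * f (u*w) := by
    refine setIntegral_congr_fun measurableSet_Ioi (fun u hu => ?_)
    have hu0 : (0:ℝ) < u := hu
    rw [S_scale ha hr hu0,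
      show u * f u * (u * ∫ w in Ioi 1, f (u*w)) = (u^2 * f u) * ∫ w in Ioi 1, f (u*w) by ring,
      ← MeasureTheory.integral_const_mul]
  -- integrability on the product for swapping
  have hFc : Continuous (Function.uncurry fun (u w : ℝ) => u^2 * f u * f (u*w)) := by
    exact ((continuous_fst.pow 2).mul (hfc.comp continuous_fst)).mul
      (hfc.comp (continuous_fst.mul continuous_snd))
  have hint : Integrable (Function.uncurry fun (u w : ℝ) => u^2 * f u * f (u*w))
      ((volume.restrict (Ioi 0)).prod (volume.restrict (Ioi 1))) := by
    refine (integrable_prod_iff hFc.aestronglyMeasurable).mpr ⟨?_, ?_⟩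
    · filter_upwards [ae_restrict_mem measurableSet_Ioi] with u hu
      have hu0 : (0:ℝ) < u := hu
      exact ((integrableOn_Ioi_comp_mul_left_iff f 1 hu0).mpr
        (by rw [mul_one]; exact hfi.integrableOn)).const_mul (u^2 * f u)
    · refine (IntufS ha hr).congr ?_
      filter_upwards [ae_restrict_mem measurableSet_Ioi] with u hu
      have hu0 : (0:ℝ) < u := hu
      have h2 : (∫ w in Ioi (1:ℝ), ‖u^2 * f u * f (u*w)‖)
          = ∫ w in Ioi (1:ℝ), (u^2 * f u) * f (u*w) := by
        refine setIntegral_congr_fun measurableSet_Ioi (fun w hw => ?_)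
        exact norm_of_nonneg (by have h3 := hf0 u; have h4 := hf0 (u*w); positivity)
      simp only [Function.uncurry_apply_pair]
      rw [h2, MeasureTheory.integral_const_mul, S_scale ha hr hu0]
      ring
  have hswap := integral_integral_swap hint
  -- inner integral evaluation
  have hinner : ∀ w ∈ Ioi (1:ℝ), (∫ u in Ioi (0:ℝ), u^2 * f u * f (u*w))
      = (Gamma (2*a+1) / (r * Gamma a ^ 2)) * (w ^ (a-1) * (1+w) ^ (-(2*a+1))) := by
    intro w hw
    have hw1 : (1:ℝ) < w := hw
    have hw0 : (0:ℝ) < w := by linarith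
    have h1w : (0:ℝ) < 1 + w := by linarith
    have hrw : (0:ℝ) < r * (1+w) := by positivity
    have hGa : (0:ℝ) < Gamma a := Gamma_pos_of_pos ha0
    have hra : (0:ℝ) < r ^ a := Real.rpow_pos_of_pos hr a
    have hr2a1 : (0:ℝ) < r ^ (2*a+1) := Real.rpow_pos_of_pos hr _
    have hptwise : ∀ u ∈ Ioi (0:ℝ), u^2 * f u * f (u*w)
        = ((r^a/Gamma a)^2 * (w^(a-1))) * (u ^ ((2*a+1)-1) * exp (-((r*(1+w)) * u))) := by
      intro u hu
      have hu0 : (0:ℝ) < u := hu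
      have eE : exp (-(r*u)) * exp (-(r*(u*w))) = exp (-((r*(1+w))*u)) := by
        rw [← Real.exp_add]; ring_nf
      have eU : u ^ ((2*a+1)-1 : ℝ) = u^2 * (u^(a-1) * u^(a-1)) := by
        rw [show ((2*a+1)-1 : ℝ) = ((2:ℕ):ℝ) + ((a-1)+(a-1)) by push_cast; ring,
          Real.rpow_add hu0, Real.rpow_add hu0, Real.rpow_natCast]
      rw [hfdef]
      unfold gammaPDFReal
      rw [if_pos hu0.le, if_pos (by positivity : (0:ℝ) ≤ u * w),
        Real.mul_rpow hu0.le hw0.le]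
      calc u^2 * (r^a/Gamma a * u^(a-1) * exp (-(r*u)))
            * (r^a/Gamma a * (u^(a-1)*w^(a-1)) * exp (-(r*(u*w))))
          = ((r^a/Gamma a)^2 * (w^(a-1)))
            * ((u^2 * (u^(a-1)*u^(a-1))) * (exp (-(r*u)) * exp (-(r*(u*w))))) := by ring
        _ = ((r^a/Gamma a)^2 * (w^(a-1))) * (u ^ ((2*a+1)-1:ℝ) * exp (-((r*(1+w))*u))) := by
            rw [eE, ← eU]
    have e1 : ((1:ℝ)/(r*(1+w)))^(2*a+1) = (r^(2*a+1))⁻¹ * (1+w) ^ (-(2*a+1)) := by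
      rw [one_div, Real.inv_rpow hrw.le, Real.mul_rpow hr.le h1w.le, mul_inv,
        ← Real.rpow_neg hr.le, ← Real.rpow_neg h1w.le, Real.rpow_neg hr.le]
    have e2 : (r^a/Gamma a)^2 * (r^(2*a+1))⁻¹ = (r * Gamma a ^2)⁻¹ := by
      have h5 : (r^a)^2 = r ^ (2*a) := by
        rw [sq, ← Real.rpow_add hr]; ring_nf
      rw [div_pow, h5, show (2*a+1 : ℝ) = 2*a + 1 from rfl, Real.rpow_add hr, Real.rpow_one]
      field_simp
    rw [setIntegral_congr_fun measurableSet_Ioi hptwise, MeasureTheory.integral_const_mul,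
      grVal (by linarith : (0:ℝ) < 2*a+1) hrw]
    calc ((r^a/Gamma a)^2 * (w^(a-1))) * (((1:ℝ)/(r*(1+w)))^(2*a+1) * Gamma (2*a+1))
        = ((r^a/Gamma a)^2 * (r^(2*a+1))⁻¹)
            * (Gamma (2*a+1) * (w^(a-1) * (1+w)^(-(2*a+1)))) := by rw [e1]; ring
      _ = (Gamma (2*a+1) / (r * Gamma a^2)) * (w^(a-1) * (1+w)^(-(2*a+1))) := by
          rw [e2]; ring
  rw [h1, hswap, setIntegral_congr_fun measurableSet_Ioi hinner,
    MeasureTheory.integral_const_mul]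


lemma J_eval {a : ℝ} (ha : 1 < a) :
    ∫ w in Ioi (1:ℝ), w ^ (a-1) * (1+w) ^ (-(2*a+1))
      = Gamma a ^ 2 / (4 * Gamma (2*a)) - (2:ℝ) ^ (-2*a) / (2*a) :=
  (J_sub ha).trans (A_eval ha)

lemma Smoment {a r : ℝ} (ha : 1 < a) (hr : 0 < r) :
    ∫ u in Ioi (0:ℝ), (∫ t in Ioi u, gammaPDFReal a r t) ^ 2
      = a/r - Gamma (a + 1/2) / (Real.sqrt π * Gamma a * r) := by
  have h2a : (0:ℝ) < 2*a := by linarith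
  have hG2a : 0 < Gamma (2*a) := Gamma_pos_of_pos h2a
  have hGa : 0 < Gamma a := Gamma_pos_of_pos (by linarith)
  have hs : (0:ℝ) < Real.sqrt π := Real.sqrt_pos.mpr pi_pos
  have hdup := Real.Gamma_mul_Gamma_add_half a
  have hG21 : Gamma (2*a+1) = 2*a * Gamma (2*a) := by
    rw [Real.Gamma_add_one h2a.ne']
  have hp2 : (0:ℝ) < (2:ℝ)^(1-2*a) := Real.rpow_pos_of_pos two_pos _
  rw [IBP ha hr, Teval ha hr, J_eval ha, hG21,
    show (2:ℝ)^(-2*a) = (2:ℝ)^(1-2*a)/2 by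
      rw [show (1-2*a:ℝ) = 1 + (-2*a) by ring, Real.rpow_add two_pos, Real.rpow_one]; ring]
  set Gh := Gamma (a + 1/2) with hGh
  set G2 := Gamma (2*a) with hG2
  set Ga := Gamma a with hGa2
  set P := (2:ℝ)^(1-2*a) with hP
  set sp := Real.sqrt π with hsp
  field_simp
  linear_combination 4 * hdup


section prodpart
variable {a r : ℝ}

lemma gmeas_Iio (ha : 1 < a) (hr : 0 < r) : gammaMeasure a r (Iio 0) = 0 := by
  rw [gammaMeasure, withDensity_apply _ measurableSet_Iio]
  exact lintegral_gammaPDF_of_nonpos le_rfl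

lemma gmeas_Ioi (ha : 1 < a) (hr : 0 < r) (t : ℝ) :
    gammaMeasure a r (Ioi t) = ENNReal.ofReal (∫ s in Ioi t, gammaPDFReal a r s) := by
  rw [gammaMeasure, withDensity_apply _ measurableSet_Ioi]
  simp only [gammaPDF]
  exact (ofReal_integral_eq_lintegral_ofReal ((gpdf_integrable ha hr).integrableOn)
    (ae_of_all _ fun s => gammaPDFReal_nonneg (by linarith) hr s)).symm

lemma min_nonneg_ae (ha : 1 < a) (hr : 0 < r) :
    0 ≤ᵐ[(gammaMeasure a r).prod (gammaMeasure a r)] fun p : ℝ × ℝ => min p.1 p.2 := by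
  set μ := gammaMeasure a r
  haveI : IsProbabilityMeasure μ := isProbabilityMeasure_gammaMeasure (by linarith) hr
  have hnull : (μ.prod μ) {p : ℝ × ℝ | min p.1 p.2 < 0} = 0 := by
    have hsub : {p : ℝ × ℝ | min p.1 p.2 < 0} ⊆ (Iio 0 ×ˢ univ) ∪ (univ ×ˢ Iio 0) := by
      intro p hp
      have hp' : min p.1 p.2 < 0 := hp
      rcases min_lt_iff.mp hp' with h | h
      · exact Or.inl ⟨h, mem_univ _⟩
      · exact Or.inr ⟨mem_univ _, h⟩
    refine measure_mono_null hsub (measure_union_null ?_ ?_)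
    · rw [Measure.prod_prod, gmeas_Iio ha hr, zero_mul]
    · rw [Measure.prod_prod, gmeas_Iio ha hr, mul_zero]
  filter_upwards [measure_eq_zero_iff_ae_notMem.mp hnull] with p hp
  simpa using not_lt.mp hp

lemma gamma_min_lintegral (ha : 1 < a) (hr : 0 < r) :
    ∫⁻ p : ℝ × ℝ, ENNReal.ofReal (min p.1 p.2)
        ∂((gammaMeasure a r).prod (gammaMeasure a r))
      = ENNReal.ofReal (a/r - Gamma (a + 1/2) / (Real.sqrt π * Gamma a * r)) := by
  set μ := gammaMeasure a r with hμ
  haveI : IsProbabilityMeasure μ := isProbabilityMeasure_gammaMeasure (by linarith) hr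
  have hlc := lintegral_eq_lintegral_meas_lt (μ.prod μ) (min_nonneg_ae ha hr)
    (continuous_fst.min continuous_snd).aemeasurable
  rw [hlc]
  have hset : ∀ t : ℝ, {p : ℝ × ℝ | t < min p.1 p.2} = Ioi t ×ˢ Ioi t := by
    intro t; ext p; simp [lt_min_iff, Set.mem_prod]
  have h1 : ∀ t ∈ Ioi (0:ℝ), (μ.prod μ) {p : ℝ × ℝ | t < min p.1 p.2}
      = ENNReal.ofReal ((∫ s in Ioi t, gammaPDFReal a r s) ^ 2) := by
    intro t ht
    rw [hset t, Measure.prod_prod, gmeas_Ioi ha hr, ← ENNReal.ofReal_mul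
      (setIntegral_nonneg measurableSet_Ioi fun s _ => gammaPDFReal_nonneg (by linarith) hr s), sq]
  rw [setLIntegral_congr_fun measurableSet_Ioi h1]
  rw [← ofReal_integral_eq_lintegral_ofReal (IntS2 ha hr)
    (ae_of_all _ fun u => sq_nonneg _)]
  rw [Smoment ha hr]

lemma gamma_min_integrable (ha : 1 < a) (hr : 0 < r) :
    Integrable (fun p : ℝ × ℝ => min p.1 p.2)
      ((gammaMeasure a r).prod (gammaMeasure a r)) := by
  haveI : IsProbabilityMeasure (gammaMeasure a r) := isProbabilityMeasure_gammaMeasure (by linarith) hr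
  refine ⟨(continuous_fst.min continuous_snd).aestronglyMeasurable, ?_⟩
  rw [hasFiniteIntegral_iff_ofReal (min_nonneg_ae ha hr), gamma_min_lintegral ha hr]
  exact ENNReal.ofReal_lt_top

lemma gamma_min_integral (ha : 1 < a) (hr : 0 < r) :
    ∫ p : ℝ × ℝ, min p.1 p.2 ∂((gammaMeasure a r).prod (gammaMeasure a r))
      = a/r - Gamma (a + 1/2) / (Real.sqrt π * Gamma a * r) := by
  haveI : IsProbabilityMeasure (gammaMeasure a r) := isProbabilityMeasure_gammaMeasure (by linarith) hr
  rw [integral_eq_lintegral_of_nonneg_ae (min_nonneg_ae ha hr)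
    (continuous_fst.min continuous_snd).aestronglyMeasurable, gamma_min_lintegral ha hr]
  rw [ENNReal.toReal_ofReal]
  rw [← Smoment ha hr]
  exact setIntegral_nonneg measurableSet_Ioi fun u _ => sq_nonneg _
end prodpart


lemma le_of_sq_le_sq'' {p q : ℝ} (hp : 0 ≤ p) (hq : 0 ≤ q) (h : p^2 ≤ q^2) : p ≤ q := by
  calc p = Real.sqrt (p^2) := (Real.sqrt_sq hp).symm
    _ ≤ Real.sqrt (q^2) := Real.sqrt_le_sqrt h
    _ = q := Real.sqrt_sq hq

lemma gamma_midpoint {s t : ℝ} (hs : 0 < s) (ht : 0 < t) :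
    Gamma ((s+t)/2) ^ 2 ≤ Gamma s * Gamma t := by
  have h := Real.convexOn_log_Gamma.2 (mem_Ioi.mpr hs) (mem_Ioi.mpr ht)
    (by norm_num : (0:ℝ) ≤ 1/2) (by norm_num : (0:ℝ) ≤ 1/2) (by norm_num)
  simp only [Function.comp, smul_eq_mul] at h
  have hm : 0 < (s+t)/2 := by linarith
  rw [show (1/2:ℝ)*s + (1/2)*t = (s+t)/2 by ring] at h
  rw [show Gamma ((s+t)/2)^2 = exp (log (Gamma ((s+t)/2)) + log (Gamma ((s+t)/2))) by
      rw [Real.exp_add, Real.exp_log (Gamma_pos_of_pos hm), sq],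
    show Gamma s * Gamma t = exp (log (Gamma s) + log (Gamma t)) by
      rw [Real.exp_add, Real.exp_log (Gamma_pos_of_pos hs), Real.exp_log (Gamma_pos_of_pos ht)]]
  exact Real.exp_le_exp.mpr (by linarith)

lemma gautschi_upper {α : ℝ} (hα : 0 < α) :
    Gamma (α + 1/2) ≤ Gamma α * Real.sqrt α := by
  have h := gamma_midpoint hα (by linarith : (0:ℝ) < α + 1)
  rw [show (α + (α+1))/2 = α + 1/2 by ring, Real.Gamma_add_one hα.ne'] at h
  refine le_of_sq_le_sq'' (Gamma_pos_of_pos (by linarith)).le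
    (mul_nonneg (Gamma_pos_of_pos hα).le (Real.sqrt_nonneg _)) ?_
  rw [mul_pow, Real.sq_sqrt hα.le]
  calc Gamma (α+1/2)^2 ≤ Gamma α * (α * Gamma α) := h
    _ = Gamma α ^2 * α := by ring

lemma gautschi_lower {α : ℝ} (hα : 0 < α) :
    α * Gamma α ≤ Real.sqrt (α + 1/2) * Gamma (α + 1/2) := by
  have h := gamma_midpoint (by linarith : (0:ℝ) < α + 1/2) (by linarith : (0:ℝ) < α + 3/2)
  rw [show ((α + 1/2) + (α + 3/2))/2 = α + 1 by ring,
    show (α + 3/2 : ℝ) = (α + 1/2) + 1 by ring,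
    Real.Gamma_add_one (by linarith : (α + 1/2 : ℝ) ≠ 0),
    Real.Gamma_add_one hα.ne'] at h
  refine le_of_sq_le_sq'' (mul_nonneg hα.le (Gamma_pos_of_pos hα).le)
    (mul_nonneg (Real.sqrt_nonneg _) (Gamma_pos_of_pos (by linarith)).le) ?_
  rw [mul_pow, mul_pow, Real.sq_sqrt (by linarith : (0:ℝ) ≤ α + 1/2),
    ← mul_pow]
  calc (α * Gamma α)^2 ≤ Gamma (α+1/2) * ((α+1/2) * Gamma (α+1/2)) := h
    _ = (α+1/2) * Gamma (α+1/2)^2 := by ring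

lemma asymp_bound {x b : ℝ} (hx : 0 < x) (hb : 0 < b) :
    |(b * (x / b + 1) - (b / Real.sqrt π) * (Gamma (x / b + 3/2) / Gamma (x / b + 1)) - x)
      - (-Real.sqrt (b * x / π) + b)|
      ≤ (1/(Real.sqrt π * Real.sqrt x)) * b ^ ((3:ℝ)/2) := by
  have hsπ : 0 < Real.sqrt π := Real.sqrt_pos.mpr pi_pos
  have hsx : 0 < Real.sqrt x := Real.sqrt_pos.mpr hx
  have hsb : 0 < Real.sqrt b := Real.sqrt_pos.mpr hb
  set α := x / b + 1 with hα
  have hxb : 0 < x / b := div_pos hx hb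
  have hα1 : 1 < α := by rw [hα]; linarith
  have hα0 : 0 < α := by linarith
  have hGα : 0 < Gamma α := Gamma_pos_of_pos hα0
  have hGh : 0 < Gamma (α + 1/2) := Gamma_pos_of_pos (by linarith)
  have hbα : b * α = x + b := by rw [hα]; field_simp
  set R := Gamma (α + 1/2) / Gamma α with hR
  have hR0 : 0 < R := div_pos hGh hGα
  have hb32 : b ^ ((3:ℝ)/2) = b * Real.sqrt b := by
    rw [show ((3:ℝ)/2) = 1 + 1/2 by norm_num, Real.rpow_add hb, Real.rpow_one,
      ← Real.sqrt_eq_rpow]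
  -- key1 : sqrt (b*x) ≤ b*R
  have hQR : b * α / Real.sqrt (α + 1/2) ≤ b * R := by
    have h1 := gautschi_lower hα0
    rw [div_le_iff₀ (Real.sqrt_pos.mpr (by linarith : (0:ℝ) < α + 1/2)), hR]
    calc b * α = α * Gamma α * (b / Gamma α) := by field_simp
      _ ≤ Real.sqrt (α+1/2) * Gamma (α+1/2) * (b / Gamma α) := by
          exact mul_le_mul_of_nonneg_right h1 (by positivity)
      _ = b * (Gamma (α+1/2) / Gamma α) * Real.sqrt (α+1/2) := by ring
  have hQ2 : b * x ≤ (b * α / Real.sqrt (α + 1/2))^2 := by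
    rw [div_pow, Real.sq_sqrt (by linarith : (0:ℝ) ≤ α + 1/2),
      le_div_iff₀ (by linarith : (0:ℝ) < α + 1/2), hbα]
    have e : α + 1/2 = (x + 3*b/2)/b := by rw [hα]; field_simp; ring
    rw [e, show b * x * ((x + 3*b/2)/b) = x * (x + 3*b/2) by field_simp]
    nlinarith [sq_nonneg b, mul_pos hb hx]
  have key1 : Real.sqrt (b * x) ≤ b * R := by
    calc Real.sqrt (b * x) ≤ Real.sqrt ((b * α / Real.sqrt (α + 1/2))^2) :=
          Real.sqrt_le_sqrt hQ2
      _ = b * α / Real.sqrt (α + 1/2) := Real.sqrt_sq (by positivity)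
      _ ≤ b * R := hQR
  -- key2 : b*R ≤ sqrt (b*(x+b))
  have key2 : b * R ≤ Real.sqrt (b * (x + b)) := by
    have h1 := gautschi_upper hα0
    have h2 : R ≤ Real.sqrt α := by
      rw [hR, div_le_iff₀ hGα]
      calc Gamma (α+1/2) ≤ Gamma α * Real.sqrt α := h1
        _ = Real.sqrt α * Gamma α := by ring
    calc b * R ≤ b * Real.sqrt α := mul_le_mul_of_nonneg_left h2 hb.le
      _ = Real.sqrt (b^2) * Real.sqrt α := by rw [Real.sqrt_sq hb.le]
      _ = Real.sqrt (b^2 * α) := (Real.sqrt_mul (sq_nonneg b) α).symm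
      _ = Real.sqrt (b * (x + b)) := by rw [show b^2 * α = b * (b * α) by ring, hbα]
  -- key3 : sqrt (b*(x+b)) ≤ sqrt (b*x) + b^(3/2)/sqrt x
  have key3 : Real.sqrt (b * (x + b)) ≤ Real.sqrt (b * x) + b ^ ((3:ℝ)/2) / Real.sqrt x := by
    have h7 : Real.sqrt (b * (x + b)) ≤ Real.sqrt b * (x + b) / Real.sqrt x := by
      have h8 : b * (x + b) ≤ b * (x + b)^2 / x := by
        rw [le_div_iff₀ hx]
        have e9 : b*(x+b)^2 - b*(x+b)*x = b*b*(x+b) := by ring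
        nlinarith [mul_nonneg (mul_nonneg hb.le hb.le) (by linarith : (0:ℝ) ≤ x + b)]
      calc Real.sqrt (b * (x + b)) ≤ Real.sqrt (b * (x + b)^2 / x) := Real.sqrt_le_sqrt h8
        _ = Real.sqrt b * (x + b) / Real.sqrt x := by
            rw [Real.sqrt_div (by positivity) x, Real.sqrt_mul hb.le,
              Real.sqrt_sq (by linarith)]
    refine h7.trans (le_of_eq ?_)
    rw [hb32, Real.sqrt_mul hb.le, div_eq_iff hsx.ne', add_mul,
      div_mul_cancel₀ _ hsx.ne', mul_assoc, Real.mul_self_sqrt hx.le]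
    ring
  -- assemble
  have hval : (b * (x / b + 1) - (b / Real.sqrt π) * (Gamma (x / b + 3/2) / Gamma (x / b + 1))
        - x) - (-Real.sqrt (b * x / π) + b)
      = (Real.sqrt (b*x) - b * R)/Real.sqrt π := by
    rw [show x/b + 3/2 = α + 1/2 by rw [hα]; ring,
      Real.sqrt_div (by positivity : (0:ℝ) ≤ b * x) π,
      show b * (x/b + 1) = x + b by field_simp, ← hR]
    ring
  rw [hval, abs_div, abs_of_pos hsπ, abs_of_nonpos (by linarith), neg_sub]
  rw [div_le_iff₀ hsπ, show 1/(Real.sqrt π * Real.sqrt x) * b ^ ((3:ℝ)/2) * Real.sqrt π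
    = b ^ ((3:ℝ)/2) / Real.sqrt x by field_simp]
  linarith [key2.trans key3]

end gammaFacts2
end helpers

section main
open Set Filter Topology

/-- If, for each `b > 0`, `X b` and `Y b` are i.i.d. Gamma(shape `x/b + 1`, scale `b`)
random variables, then `E[min{X,Y} − x] = b(x/b+1) − (b/√π) Γ(x/b+3/2)/Γ(x/b+1) − x`, and as
`b → 0⁺` this equals `−√(bx/π) + b + O_x(b^(3/2))`. -/
theorem min_gamma_kernel_first_moment_asymp {Ω : Type*} [MeasureSpace Ω]
    [IsProbabilityMeasure (ℙ : Measure Ω)]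
    (x : ℝ) (hx : 0 < x) (X Y : ℝ → Ω → ℝ)
    (hX : ∀ b, 0 < b → Measure.map (X b) ℙ = gammaMeasure (b⁻¹ * x + 1) b⁻¹)
    (hY : ∀ b, 0 < b → Measure.map (Y b) ℙ = gammaMeasure (b⁻¹ * x + 1) b⁻¹)
    (hindep : ∀ b, 0 < b → IndepFun (X b) (Y b) ℙ) :
    (∀ b, 0 < b →
      ∫ ω, (min (X b ω) (Y b ω) - x) ∂ℙ =
        b * (x / b + 1) - (b / Real.sqrt π) * (Real.Gamma (x / b + 3/2) / Real.Gamma (x / b + 1))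
          - x) ∧
    ∃ C b₀ : ℝ, 0 < C ∧ 0 < b₀ ∧ ∀ b, 0 < b → b < b₀ →
      |(∫ ω, (min (X b ω) (Y b ω) - x) ∂ℙ) - (-Real.sqrt (b * x / π) + b)|
        ≤ C * b ^ ((3 : ℝ) / 2) := by
  have P1 : ∀ b, 0 < b →
      ∫ ω, (min (X b ω) (Y b ω) - x) ∂ℙ =
        b * (x / b + 1) - (b / Real.sqrt π) * (Real.Gamma (x / b + 3/2) / Real.Gamma (x / b + 1))
          - x := by
    intro b hb
    have hbi : (0:ℝ) < b⁻¹ := inv_pos.mpr hb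
    have ha : 1 < b⁻¹ * x + 1 := by nlinarith [mul_pos hbi hx]
    have ha0 : (0:ℝ) < b⁻¹ * x + 1 := by linarith
    haveI hPμ : IsProbabilityMeasure (gammaMeasure (b⁻¹ * x + 1) b⁻¹) :=
      isProbabilityMeasure_gammaMeasure ha0 hbi
    have hXm : AEMeasurable (X b) ℙ := by
      by_contra h
      have h0 := Measure.map_of_not_aemeasurable (f := X b) (μ := (ℙ : Measure Ω)) h
      rw [hX b hb] at h0
      have h1 : (gammaMeasure (b⁻¹ * x + 1) b⁻¹) univ = 1 := measure_univ
      rw [h0] at h1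
      simp at h1
    have hYm : AEMeasurable (Y b) ℙ := by
      by_contra h
      have h0 := Measure.map_of_not_aemeasurable (f := Y b) (μ := (ℙ : Measure Ω)) h
      rw [hY b hb] at h0
      have h1 : (gammaMeasure (b⁻¹ * x + 1) b⁻¹) univ = 1 := measure_univ
      rw [h0] at h1
      simp at h1
    have hmap : Measure.map (fun ω => (X b ω, Y b ω)) ℙ
        = (gammaMeasure (b⁻¹ * x + 1) b⁻¹).prod (gammaMeasure (b⁻¹ * x + 1) b⁻¹) := by
      rw [(indepFun_iff_map_prod_eq_prod_map_map hXm hYm).mp (hindep b hb),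
        hX b hb, hY b hb]
    have hintg : Integrable (fun ω => min (X b ω) (Y b ω)) ℙ := by
      have h2 := (integrable_map_measure
        (f := fun ω => (X b ω, Y b ω)) (g := fun p : ℝ × ℝ => min p.1 p.2)
        (continuous_fst.min continuous_snd).aestronglyMeasurable
        (hXm.prodMk hYm)).mp (by rw [hmap]; exact gamma_min_integrable ha hbi)
      exact h2
    have hval : ∫ ω, min (X b ω) (Y b ω) ∂ℙ
        = (b⁻¹ * x + 1)/b⁻¹ - Gamma ((b⁻¹ * x + 1) + 1/2)
            / (Real.sqrt π * Gamma (b⁻¹ * x + 1) * b⁻¹) := by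
      rw [← gamma_min_integral ha hbi, ← hmap,
        integral_map (hXm.prodMk hYm) (continuous_fst.min continuous_snd).aestronglyMeasurable]
    rw [integral_sub hintg (integrable_const x), MeasureTheory.integral_const, hval]
    simp only [probReal_univ, one_smul]
    have hsπ : 0 < Real.sqrt π := Real.sqrt_pos.mpr pi_pos
    have e1 : b⁻¹ * x + 1 = x/b + 1 := by rw [inv_mul_eq_div]
    have e2 : (b⁻¹ * x + 1) + 1/2 = x/b + 3/2 := by rw [inv_mul_eq_div]; ring
    rw [e2, e1]
    have hG1 : 0 < Gamma (x/b + 1) := Gamma_pos_of_pos (by positivity)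
    field_simp
  refine ⟨P1, 1/(Real.sqrt π * Real.sqrt x), 1,
    div_pos one_pos (mul_pos (Real.sqrt_pos.mpr pi_pos) (Real.sqrt_pos.mpr hx)),
    one_pos, fun b hb _ => ?_⟩
  rw [P1 b hb]
  exact asymp_bound hx hb

end main
end

section
/- If X, Y are i.i.d. Gamma(b^(−1)x + 1, b) random variables with fixed x > 0, then E[(min{X,Y} − x)²] = bx + O_x(b^(3/2)) as b → 0⁺. -/
open MeasureTheory ProbabilityTheory Real

open scoped ENNReal NNReal
open Set

namespace MinGamma

variable {a r : ℝ}

/-- Scaling substitution for lintegrals over `Ioi 0`. -/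
lemma lint_scale (f : ℝ → ℝ≥0∞) (hf : Measurable f) {c : ℝ} (hc : 0 < c) :
    ∫⁻ t in Ioi (0:ℝ), f t = ENNReal.ofReal c * ∫⁻ w in Ioi (0:ℝ), f (c * w) := by
  have hmap : Measure.map (fun w : ℝ => c * w) (volume.restrict (Ioi (0:ℝ)))
      = (ENNReal.ofReal |c⁻¹| • volume).restrict (Ioi (0:ℝ)) := by
    have hpre : (fun w : ℝ => c * w) ⁻¹' (Ioi (0:ℝ)) = Ioi (0:ℝ) := by
      ext w
      simp only [Set.mem_preimage, Set.mem_Ioi]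
      exact ⟨fun h => by nlinarith, fun h => by positivity⟩
    calc Measure.map (fun w : ℝ => c * w) (volume.restrict (Ioi (0:ℝ)))
        = Measure.map (fun w : ℝ => c * w)
            (volume.restrict ((fun w : ℝ => c * w) ⁻¹' (Ioi (0:ℝ)))) := by rw [hpre]
      _ = (Measure.map (fun w : ℝ => c * w) volume).restrict (Ioi (0:ℝ)) :=
          (Measure.restrict_map (measurable_const_mul c) measurableSet_Ioi).symm
      _ = (ENNReal.ofReal |c⁻¹| • volume).restrict (Ioi (0:ℝ)) := by
          rw [Real.map_volume_mul_left (ne_of_gt hc)]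
  have h1 : ∫⁻ w in Ioi (0:ℝ), f (c * w) = ∫⁻ t, f t ∂(Measure.map (fun w : ℝ => c * w)
      (volume.restrict (Ioi (0:ℝ)))) := (lintegral_map hf (measurable_const_mul c)).symm
  rw [h1, hmap]
  simp only [Measure.restrict_smul, lintegral_smul_measure, ← mul_assoc]
  rw [smul_eq_mul, ← mul_assoc, ← ENNReal.ofReal_mul hc.le, abs_of_pos (inv_pos.mpr hc), mul_inv_cancel₀ (ne_of_gt hc)]
  simp


lemma pdf_zero_of_nonpos (ha : 1 < a) {t : ℝ} (ht : t ≤ 0) : gammaPDFReal a r t = 0 := by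
  unfold gammaPDFReal
  rcases lt_or_eq_of_le ht with h | h
  · rw [if_neg (not_le.mpr h)]
  · subst h
    rw [if_pos le_rfl, Real.zero_rpow (by linarith), mul_zero, zero_mul]

lemma integral_gamma (ha : 1 < a) (hr : 0 < r) (g : ℝ → ℝ) :
    ∫ t, g t ∂(gammaMeasure a r) = ∫ t in Ioi (0:ℝ), gammaPDFReal a r t * g t := by
  have hmeas : Measurable (fun t => Real.toNNReal (gammaPDFReal a r t)) :=
    (measurable_gammaPDFReal a r).real_toNNReal
  have h0 : gammaMeasure a r
      = volume.withDensity (fun t => ((Real.toNNReal (gammaPDFReal a r t) : ℝ≥0) : ℝ≥0∞)) := rfl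
  rw [h0, integral_withDensity_eq_integral_smul hmeas g]
  have h1 : (fun t => (Real.toNNReal (gammaPDFReal a r t) : ℝ≥0) • g t)
      = fun t => gammaPDFReal a r t * g t := by
    funext t
    rw [NNReal.smul_def, Real.coe_toNNReal _ (gammaPDFReal_nonneg (by linarith) hr t), smul_eq_mul]
  rw [h1]
  exact (setIntegral_eq_integral_of_forall_compl_eq_zero (fun t ht => by
    rw [pdf_zero_of_nonpos ha (by simpa using ht), zero_mul])).symm

lemma lintegral_gamma (ha : 1 < a) (hr : 0 < r) {f : ℝ → ℝ≥0∞} (hf : Measurable f) :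
    ∫⁻ t, f t ∂(gammaMeasure a r)
      = ∫⁻ t in Ioi (0:ℝ), ENNReal.ofReal (gammaPDFReal a r t) * f t := by
  have hm : Measurable (gammaPDF a r) := (measurable_gammaPDFReal a r).ennreal_ofReal
  rw [gammaMeasure, lintegral_withDensity_eq_lintegral_mul _ hm hf]
  rw [← lintegral_add_compl (fun t => (gammaPDF a r * f) t) (measurableSet_Ioi (a := (0:ℝ)))]
  have h2 : ∫⁻ t in (Ioi (0:ℝ))ᶜ, (gammaPDF a r * f) t = 0 := by
    have hz : ∀ t ∈ (Ioi (0:ℝ))ᶜ, (gammaPDF a r * f) t = (0:ℝ≥0∞) := by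
      intro t ht
      show gammaPDF a r t * f t = 0
      rw [gammaPDF, pdf_zero_of_nonpos ha (by simpa using ht)]
      simp
    rw [setLIntegral_congr_fun_ae (measurableSet_Ioi (a := (0:ℝ))).compl (ae_of_all _ hz),
      lintegral_zero]
  rw [h2, add_zero]
  rfl

lemma integrable_pow_gamma (ha : 1 < a) (hr : 0 < r) (k : ℕ) :
    Integrable (fun t => t ^ k) (gammaMeasure a r) := by
  have hm : Measurable (gammaPDF a r) := (measurable_gammaPDFReal a r).ennreal_ofReal
  rw [gammaMeasure, integrable_withDensity_iff hm
    (ae_of_all _ (fun t => ENNReal.ofReal_lt_top))]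
  have h1 : (fun t => t ^ k * (gammaPDF a r t).toReal)
      = fun t => t ^ k * gammaPDFReal a r t := by
    funext t
    rw [gammaPDF, ENNReal.toReal_ofReal (gammaPDFReal_nonneg (by linarith) hr t)]
  rw [h1]
  have h2 : IntegrableOn (fun t => t ^ k * gammaPDFReal a r t) (Ioi (0:ℝ)) := by
    have h3 : IntegrableOn (fun t : ℝ => t ^ (a + k - 1) * exp (-r * t ^ (1:ℝ))) (Ioi 0) :=
      integrableOn_rpow_mul_exp_neg_mul_rpow (by push_cast; linarith) one_pos hr
    simp only [rpow_one] at h3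
    apply IntegrableOn.congr_fun (h3.const_mul (r ^ a / Gamma a)) (fun t ht => ?_)
      measurableSet_Ioi
    simp only [gammaPDFReal, if_pos (le_of_lt (mem_Ioi.mp ht))]
    rw [show a + (k:ℝ) - 1 = a - 1 + (k:ℝ) by ring, rpow_add (mem_Ioi.mp ht), rpow_natCast]
    ring
  exact h2.integrable_of_forall_notMem_eq_zero (fun t ht => by
    rw [pdf_zero_of_nonpos ha (by simpa using ht), mul_zero])

lemma moment_gamma (ha : 1 < a) (hr : 0 < r) (k : ℕ) :
    ∫ t, t ^ k ∂(gammaMeasure a r) = Gamma (a + k) / (Gamma a * r ^ k) := by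
  rw [integral_gamma ha hr]
  have h1 : ∀ t ∈ Ioi (0:ℝ), gammaPDFReal a r t * t ^ k
      = (r ^ a / Gamma a) * (t ^ (a + k - 1) * exp (-(r * t))) := by
    intro t ht
    simp only [gammaPDFReal, if_pos (le_of_lt (mem_Ioi.mp ht))]
    rw [show a + k - 1 = a - 1 + (k:ℝ) by ring, rpow_add (mem_Ioi.mp ht), rpow_natCast]
    ring
  rw [setIntegral_congr_fun measurableSet_Ioi h1, integral_const_mul _,
    integral_rpow_mul_exp_neg_mul_Ioi (by push_cast; linarith) hr]
  have hΓ : Gamma a ≠ 0 := ne_of_gt (Gamma_pos_of_pos (by linarith))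
  have hra : (0:ℝ) < r ^ a := rpow_pos_of_pos hr a
  rw [div_rpow zero_le_one hr.le, one_rpow, rpow_add hr, rpow_natCast]
  field_simp


lemma fact_aux (ha : 1 < a) {h : ℝ → ℝ} (hh : Measurable h) :
    ∫⁻ s in Ioi (0:ℝ), ∫⁻ t in Ioi (0:ℝ),
        ENNReal.ofReal (|s - t| * s ^ (a-1) * t ^ (a-1) * h (s + t))
      = (∫⁻ u in Ioi (0:ℝ), ENNReal.ofReal (u ^ (2*a) * h u))
        * ∫⁻ w in Ioi (0:ℝ), ENNReal.ofReal (|1 - w| * w ^ (a-1) * (1 + w) ^ (-(2*a) - 1)) := by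
  have ha0 : (0:ℝ) < a := by linarith
  -- the uncurried intermediate integrand
  set F : ℝ → ℝ → ℝ≥0∞ := fun s w =>
    ENNReal.ofReal (s ^ (2*a) * (|1 - w| * w ^ (a-1)) * h (s * (1+w))) with hF
  have hFmeas : Measurable (fun p : ℝ × ℝ => F p.1 p.2) := by
    apply Measurable.ennreal_ofReal
    exact ((measurable_fst.pow_const _).mul
      (((measurable_const.sub measurable_snd).abs).mul (measurable_snd.pow_const _))).mul
      (hh.comp (measurable_fst.mul (measurable_const.add measurable_snd)))
  -- Step 1 : inner substitution t = s * w
  have step1 : ∀ s ∈ Ioi (0:ℝ),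
      ∫⁻ t in Ioi (0:ℝ), ENNReal.ofReal (|s - t| * s ^ (a-1) * t ^ (a-1) * h (s + t))
        = ∫⁻ w in Ioi (0:ℝ), F s w := by
    intro s hs
    rw [lint_scale _ ?m1 hs]
    · rw [← lintegral_const_mul' _ _ ENNReal.ofReal_ne_top]
      apply setLIntegral_congr_fun_ae measurableSet_Ioi
      apply ae_of_all
      intro w hw
      have hs' : (0:ℝ) < s := hs
      have hw' : (0:ℝ) < w := hw
      rw [hF, ← ENNReal.ofReal_mul hs'.le]
      congr 1
      have e1 : |s - s * w| = s * |1 - w| := by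
        rw [show s - s * w = s * (1 - w) by ring, abs_mul, abs_of_pos hs']
      have e2 : (s * w) ^ (a-1) = s ^ (a-1) * w ^ (a-1) := mul_rpow hs'.le hw'.le
      have e3 : s + s * w = s * (1 + w) := by ring
      rw [e1, e2, e3]
      have e4 : s ^ (2*a) = s * (s * (s ^ (a-1) * s ^ (a-1))) := by
        have : s ^ (2*a) = s ^ ((1:ℝ) + ((1:ℝ) + ((a-1) + (a-1)))) := by
          congr 1; ring
        rw [this, rpow_add hs', rpow_add hs', rpow_add hs', rpow_one]
      rw [e4]
      ring
    case m1 =>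
      apply Measurable.ennreal_ofReal
      exact (((measurable_const.sub measurable_id').abs.mul measurable_const).mul
        (measurable_id'.pow_const _)).mul (hh.comp (measurable_const.add measurable_id'))
  rw [setLIntegral_congr_fun_ae measurableSet_Ioi (ae_of_all _ step1)]
  -- Step 2 : swap
  rw [lintegral_lintegral_swap (hFmeas.aemeasurable)]
  -- Step 3 : outer substitution s = u / (1+w)
  have step3 : ∀ w ∈ Ioi (0:ℝ),
      ∫⁻ s in Ioi (0:ℝ), F s w
        = ENNReal.ofReal (|1 - w| * w ^ (a-1) * (1 + w) ^ (-(2*a) - 1))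
          * ∫⁻ u in Ioi (0:ℝ), ENNReal.ofReal (u ^ (2*a) * h u) := by
    intro w hw
    have hw' : (0:ℝ) < w := hw
    have h1w : (0:ℝ) < 1 + w := by linarith
    -- first pull out the w-dependent constant
    have e5 : ∀ s ∈ Ioi (0:ℝ), F s w
        = ENNReal.ofReal (|1 - w| * w ^ (a-1)) * ENNReal.ofReal (s ^ (2*a) * h ((1+w) * s)) := by
      intro s hs
      have hs' : (0:ℝ) < s := hs
      rw [hF, ← ENNReal.ofReal_mul (by positivity), show (1+w) * s = s * (1+w) by ring]
      congr 1
      ring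
    rw [setLIntegral_congr_fun_ae measurableSet_Ioi (ae_of_all _ e5),
      lintegral_const_mul' _ _ ENNReal.ofReal_ne_top]
    -- now the substitution on the remaining integral
    have key : ∫⁻ u in Ioi (0:ℝ), ENNReal.ofReal (u ^ (2*a) * h u)
        = ENNReal.ofReal ((1+w) ^ (2*a + 1))
          * ∫⁻ s in Ioi (0:ℝ), ENNReal.ofReal (s ^ (2*a) * h ((1+w) * s)) := by
      rw [lint_scale (fun u => ENNReal.ofReal (u ^ (2*a) * h u)) ?m2 h1w]
      · rw [← lintegral_const_mul' _ _ ENNReal.ofReal_ne_top,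
          ← lintegral_const_mul' _ _ ENNReal.ofReal_ne_top]
        apply setLIntegral_congr_fun_ae measurableSet_Ioi
        apply ae_of_all
        intro s hs
        have hs' : (0:ℝ) < s := hs
        rw [← ENNReal.ofReal_mul h1w.le, ← ENNReal.ofReal_mul (by positivity)]
        congr 1
        rw [mul_rpow h1w.le hs'.le]
        have e6 : (1+w) * ((1+w) ^ (2*a) * s ^ (2*a) * h ((1+w) * s))
            = ((1+w) ^ ((1:ℝ)) * (1+w) ^ (2*a)) * (s ^ (2*a) * h ((1+w)*s)) := by
          rw [rpow_one]; ring
        rw [e6, ← rpow_add h1w]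
        ring_nf
      case m2 =>
        exact Measurable.ennreal_ofReal ((measurable_id'.pow_const _).mul hh)
    rw [key, ← mul_assoc, ← ENNReal.ofReal_mul (by positivity)]
    congr 2
    rw [mul_assoc, ← rpow_add h1w]
    norm_num
  rw [setLIntegral_congr_fun_ae measurableSet_Ioi (ae_of_all _ step3),
    lintegral_mul_const'' _ ?m3, mul_comm]
  case m3 =>
    exact ((((measurable_const.sub measurable_id').abs.mul
      (measurable_id'.pow_const _)).mul
      ((measurable_const.add measurable_id').pow_const _)).ennreal_ofReal).aemeasurable


lemma U_val (ha : 1 < a) (hr : 0 < r) (k : ℕ) :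
    ∫⁻ u in Ioi (0:ℝ), ENNReal.ofReal (u ^ (2*a) * (u ^ k * exp (-(r*u))))
      = ENNReal.ofReal ((1/r) ^ (2*a + (k:ℝ) + 1) * Gamma (2*a + (k:ℝ) + 1)) := by
  have ha0 : (0:ℝ) < a := by linarith
  have h1 : ∀ u ∈ Ioi (0:ℝ), ENNReal.ofReal (u ^ (2*a) * (u ^ k * exp (-(r*u))))
      = ENNReal.ofReal (u ^ (2*a + (k:ℝ)) * exp (-(r*u))) := by
    intro u hu
    congr 1
    rw [rpow_add hu, rpow_natCast]
    ring
  rw [setLIntegral_congr_fun_ae measurableSet_Ioi (ae_of_all _ h1)]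
  have hint : IntegrableOn (fun u : ℝ => u ^ (2*a + (k:ℝ)) * exp (-(r*u))) (Ioi 0) := by
    have h3 : IntegrableOn (fun t : ℝ => t ^ (2*a + (k:ℝ)) * exp (-r * t ^ (1:ℝ))) (Ioi 0) :=
      integrableOn_rpow_mul_exp_neg_mul_rpow (by have : (0:ℝ) ≤ (k:ℝ) := Nat.cast_nonneg k; linarith) one_pos hr
    simpa [rpow_one, neg_mul] using h3
  have hnn : 0 ≤ᵐ[volume.restrict (Ioi (0:ℝ))] fun u : ℝ => u ^ (2*a + (k:ℝ)) * exp (-(r*u)) :=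
    (ae_restrict_iff' measurableSet_Ioi).mpr (ae_of_all _ (fun u hu => by
      have : (0:ℝ) < u := hu
      positivity))
  rw [← ofReal_integral_eq_lintegral_ofReal hint hnn]
  congr 1
  have hval := integral_rpow_mul_exp_neg_mul_Ioi (a := 2*a + (k:ℝ) + 1) (by positivity) hr
  rw [show (2*a + (k:ℝ) + 1 - 1) = 2*a + (k:ℝ) from by ring] at hval
  exact hval

lemma lintegral_prod_gamma (ha : 1 < a) (hr : 0 < r) {f : ℝ × ℝ → ℝ≥0∞} (hf : Measurable f) :
    ∫⁻ p, f p ∂((gammaMeasure a r).prod (gammaMeasure a r))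
      = ∫⁻ s in Ioi (0:ℝ), ∫⁻ t in Ioi (0:ℝ),
          ENNReal.ofReal (gammaPDFReal a r s)
            * (ENNReal.ofReal (gammaPDFReal a r t) * f (s, t)) := by
  haveI : IsProbabilityMeasure (gammaMeasure a r) := isProbabilityMeasure_gammaMeasure (by linarith) hr
  rw [lintegral_prod _ hf.aemeasurable]
  have hout : Measurable (fun s => ∫⁻ t, f (s, t) ∂(gammaMeasure a r)) :=
    Measurable.lintegral_prod_right hf
  rw [lintegral_gamma ha hr hout]
  apply setLIntegral_congr_fun_ae measurableSet_Ioi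
  apply ae_of_all
  intro s hs
  rw [lintegral_gamma ha hr (f := fun t => f (s, t)) (hf.comp measurable_prodMk_left),
    ← lintegral_const_mul' _ _ ENNReal.ofReal_ne_top]

lemma P_fact (ha : 1 < a) (hr : 0 < r) (k : ℕ) :
    ∫⁻ p : ℝ × ℝ, ENNReal.ofReal (|p.1 - p.2| * (p.1 + p.2) ^ k)
        ∂((gammaMeasure a r).prod (gammaMeasure a r))
      = ENNReal.ofReal ((r ^ a / Gamma a)^2)
        * (ENNReal.ofReal ((1/r) ^ (2*a + (k:ℝ) + 1) * Gamma (2*a + (k:ℝ) + 1))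
          * ∫⁻ w in Ioi (0:ℝ),
              ENNReal.ofReal (|1 - w| * w ^ (a-1) * (1 + w) ^ (-(2*a) - 1))) := by
  have ha0 : (0:ℝ) < a := by linarith
  have hfm : Measurable (fun p : ℝ × ℝ => ENNReal.ofReal (|p.1 - p.2| * (p.1 + p.2) ^ k)) :=
    (((measurable_fst.sub measurable_snd).abs).mul
      ((measurable_fst.add measurable_snd).pow_const k)).ennreal_ofReal
  rw [lintegral_prod_gamma ha hr hfm]
  have hh : Measurable (fun u : ℝ => u ^ k * exp (-(r*u))) :=
    (measurable_id'.pow_const k).mul ((measurable_id'.const_mul r).neg.exp)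
  have key : ∀ s ∈ Ioi (0:ℝ), ∀ t ∈ Ioi (0:ℝ),
      ENNReal.ofReal (gammaPDFReal a r s) * (ENNReal.ofReal (gammaPDFReal a r t)
          * ENNReal.ofReal (|s - t| * (s + t) ^ k))
        = ENNReal.ofReal ((r ^ a / Gamma a)^2)
          * ENNReal.ofReal (|s - t| * s ^ (a-1) * t ^ (a-1)
              * ((s+t) ^ k * exp (-(r*(s+t))))) := by
    intro s hs t ht
    have hs' : (0:ℝ) < s := hs
    have ht' : (0:ℝ) < t := ht
    have hc : (0:ℝ) ≤ r ^ a / Gamma a := by positivity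
    rw [gammaPDFReal, if_pos hs'.le, gammaPDFReal, if_pos ht'.le]
    rw [← ENNReal.ofReal_mul (by positivity), ← ENNReal.ofReal_mul (by positivity),
      ← ENNReal.ofReal_mul (by positivity)]
    congr 1
    rw [show -(r*(s+t)) = -(r*s) + -(r*t) from by ring, exp_add]
    ring
  calc ∫⁻ s in Ioi (0:ℝ), ∫⁻ t in Ioi (0:ℝ),
        ENNReal.ofReal (gammaPDFReal a r s) * (ENNReal.ofReal (gammaPDFReal a r t)
          * ENNReal.ofReal (|s - t| * (s + t) ^ k))
      = ∫⁻ s in Ioi (0:ℝ), ∫⁻ t in Ioi (0:ℝ), ENNReal.ofReal ((r ^ a / Gamma a)^2)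
          * ENNReal.ofReal (|s - t| * s ^ (a-1) * t ^ (a-1)
            * ((s+t) ^ k * exp (-(r*(s+t))))) := by
        apply setLIntegral_congr_fun_ae measurableSet_Ioi
        apply ae_of_all
        intro s hs
        apply setLIntegral_congr_fun_ae measurableSet_Ioi
        exact ae_of_all _ (fun t ht => key s hs t ht)
    _ = ENNReal.ofReal ((r ^ a / Gamma a)^2) * ∫⁻ s in Ioi (0:ℝ), ∫⁻ t in Ioi (0:ℝ),
          ENNReal.ofReal (|s - t| * s ^ (a-1) * t ^ (a-1)
            * ((s+t) ^ k * exp (-(r*(s+t))))) := by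
        rw [← lintegral_const_mul' _ _ ENNReal.ofReal_ne_top]
        apply setLIntegral_congr_fun_ae measurableSet_Ioi
        apply ae_of_all
        intro s hs
        rw [← lintegral_const_mul' _ _ ENNReal.ofReal_ne_top]
    _ = ENNReal.ofReal ((r ^ a / Gamma a)^2)
        * (ENNReal.ofReal ((1/r) ^ (2*a + (k:ℝ) + 1) * Gamma (2*a + (k:ℝ) + 1))
          * ∫⁻ w in Ioi (0:ℝ),
              ENNReal.ofReal (|1 - w| * w ^ (a-1) * (1 + w) ^ (-(2*a) - 1))) := by
        rw [fact_aux ha hh, U_val ha hr k]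


lemma min_id (x s t : ℝ) :
    (min s t - x)^2
      = ((s-x)^2 + (t-x)^2 - |s - t| * (s + t) + 2*x*|s-t|)/2 := by
  rcases le_total s t with h | h
  · rw [min_eq_left h, abs_of_nonpos (by linarith : s - t ≤ 0)]; ring
  · rw [min_eq_right h, abs_of_nonneg (by linarith : 0 ≤ s - t)]; ring

lemma integrable_dom (ha : 1 < a) (hr : 0 < r) {g : ℝ × ℝ → ℝ} (hg : Continuous g) (C : ℝ)
    (hbd : ∀ p : ℝ × ℝ, ‖g p‖ ≤ C * ((1+p.1^2)*(1+p.2^2))) :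
    Integrable g ((gammaMeasure a r).prod (gammaMeasure a r)) := by
  haveI : IsProbabilityMeasure (gammaMeasure a r) := isProbabilityMeasure_gammaMeasure (by linarith) hr
  have h1 : Integrable (fun t : ℝ => 1 + t^2) (gammaMeasure a r) :=
    (integrable_const 1).add (integrable_pow_gamma ha hr 2)
  exact ((h1.mul_prod h1).const_mul C).mono' hg.aestronglyMeasurable (ae_of_all _ hbd)

section Dom

-- the basic facts about the dominating function
lemma dom_facts (s t : ℝ) :
    s^2 ≤ (1+s^2)*(1+t^2) ∧ t^2 ≤ (1+s^2)*(1+t^2) ∧ (1:ℝ) ≤ (1+s^2)*(1+t^2)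
      ∧ |s| ≤ (1+s^2)*(1+t^2) ∧ |t| ≤ (1+s^2)*(1+t^2) ∧ |s| * |t| ≤ (1+s^2)*(1+t^2) := by
  have h1 : |s| ≤ 1 + s^2 := by nlinarith [abs_nonneg s, sq_abs s, sq_nonneg (|s| - 1)]
  have h2 : |t| ≤ 1 + t^2 := by nlinarith [abs_nonneg t, sq_abs t, sq_nonneg (|t| - 1)]
  refine ⟨by nlinarith [sq_nonneg s, sq_nonneg t, sq_nonneg (s*t)],
    by nlinarith [sq_nonneg s, sq_nonneg t, sq_nonneg (s*t)],
    by nlinarith [sq_nonneg s, sq_nonneg t, sq_nonneg (s*t)], ?_, ?_, ?_⟩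
  · nlinarith [sq_nonneg t, abs_nonneg s]
  · nlinarith [sq_nonneg s, abs_nonneg t]
  · nlinarith [abs_nonneg s, abs_nonneg t, sq_abs s, sq_abs t, sq_nonneg (|s| - |t|),
      sq_nonneg (|s| * |t| - 1)]

lemma integrable_min_sq (ha : 1 < a) (hr : 0 < r) (x : ℝ) :
    Integrable (fun p : ℝ × ℝ => (min p.1 p.2 - x)^2)
      ((gammaMeasure a r).prod (gammaMeasure a r)) := by
  apply integrable_dom ha hr
    (((continuous_fst.min continuous_snd).sub continuous_const).pow 2) (4 + 4*x^2)
  intro p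
  dsimp only [Pi.mul_apply, Pi.sub_apply, Pi.add_apply, Pi.pow_apply]
  obtain ⟨b1, b2, b3, -, -, -⟩ := dom_facts p.1 p.2
  have hm : (min p.1 p.2 - x)^2 ≤ (p.1-x)^2 + (p.2-x)^2 := by
    rcases le_total p.1 p.2 with h | h
    · rw [min_eq_left h]; nlinarith [sq_nonneg (p.2-x)]
    · rw [min_eq_right h]; nlinarith [sq_nonneg (p.1-x)]
  rw [Real.norm_eq_abs, abs_of_nonneg (sq_nonneg _)]
  nlinarith [sq_nonneg (p.1+x), sq_nonneg (p.2+x),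
    mul_nonneg (sq_nonneg x) (by linarith : (0:ℝ) ≤ (1+p.1^2)*(1+p.2^2) - 1)]

lemma integrable_sq_fst (ha : 1 < a) (hr : 0 < r) (x : ℝ) :
    Integrable (fun p : ℝ × ℝ => (p.1 - x)^2)
      ((gammaMeasure a r).prod (gammaMeasure a r)) := by
  apply integrable_dom ha hr ((continuous_fst.sub continuous_const).pow 2) (2 + 2*x^2)
  intro p
  dsimp only [Pi.mul_apply, Pi.sub_apply, Pi.add_apply, Pi.pow_apply]
  obtain ⟨b1, b2, b3, -, -, -⟩ := dom_facts p.1 p.2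
  rw [Real.norm_eq_abs, abs_of_nonneg (sq_nonneg _)]
  nlinarith [sq_nonneg (p.1+x), sq_nonneg (p.2+x),
    mul_nonneg (sq_nonneg x) (by linarith : (0:ℝ) ≤ (1+p.1^2)*(1+p.2^2) - 1)]

lemma integrable_sq_snd (ha : 1 < a) (hr : 0 < r) (x : ℝ) :
    Integrable (fun p : ℝ × ℝ => (p.2 - x)^2)
      ((gammaMeasure a r).prod (gammaMeasure a r)) := by
  apply integrable_dom ha hr ((continuous_snd.sub continuous_const).pow 2) (2 + 2*x^2)
  intro p
  dsimp only [Pi.mul_apply, Pi.sub_apply, Pi.add_apply, Pi.pow_apply]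
  obtain ⟨b1, b2, b3, -, -, -⟩ := dom_facts p.1 p.2
  rw [Real.norm_eq_abs, abs_of_nonneg (sq_nonneg _)]
  nlinarith [sq_nonneg (p.1+x), sq_nonneg (p.2+x),
    mul_nonneg (sq_nonneg x) (by linarith : (0:ℝ) ≤ (1+p.1^2)*(1+p.2^2) - 1)]

lemma integrable_abs_mul_add (ha : 1 < a) (hr : 0 < r) :
    Integrable (fun p : ℝ × ℝ => |p.1 - p.2| * (p.1 + p.2))
      ((gammaMeasure a r).prod (gammaMeasure a r)) := by
  apply integrable_dom ha hr
    (((continuous_fst.sub continuous_snd).abs).mul (continuous_fst.add continuous_snd)) 4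
  intro p
  dsimp only [Pi.mul_apply, Pi.sub_apply, Pi.add_apply, Pi.pow_apply]
  obtain ⟨b1, b2, b3, b4, b5, b6⟩ := dom_facts p.1 p.2
  rw [Real.norm_eq_abs, abs_mul, abs_abs]
  have h1 : |p.1 - p.2| ≤ |p.1| + |p.2| := abs_sub _ _
  have h2 : |p.1 + p.2| ≤ |p.1| + |p.2| := abs_add_le _ _
  have h3 : |p.1 - p.2| * |p.1 + p.2| ≤ (|p.1| + |p.2|) * (|p.1| + |p.2|) :=
    mul_le_mul h1 h2 (abs_nonneg _) (by positivity)
  nlinarith [sq_abs p.1, sq_abs p.2]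

lemma integrable_abs_sub (ha : 1 < a) (hr : 0 < r) :
    Integrable (fun p : ℝ × ℝ => |p.1 - p.2|)
      ((gammaMeasure a r).prod (gammaMeasure a r)) := by
  apply integrable_dom ha hr ((continuous_fst.sub continuous_snd).abs) 2
  intro p
  dsimp only [Pi.mul_apply, Pi.sub_apply, Pi.add_apply, Pi.pow_apply]
  obtain ⟨b1, b2, b3, b4, b5, b6⟩ := dom_facts p.1 p.2
  rw [Real.norm_eq_abs, abs_abs]
  have h1 : |p.1 - p.2| ≤ |p.1| + |p.2| := abs_sub _ _
  linarith

lemma integrable_sub_sq (ha : 1 < a) (hr : 0 < r) :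
    Integrable (fun p : ℝ × ℝ => (p.1 - p.2)^2)
      ((gammaMeasure a r).prod (gammaMeasure a r)) := by
  apply integrable_dom ha hr ((continuous_fst.sub continuous_snd).pow 2) 4
  intro p
  dsimp only [Pi.mul_apply, Pi.sub_apply, Pi.add_apply, Pi.pow_apply]
  obtain ⟨b1, b2, b3, -, -, -⟩ := dom_facts p.1 p.2
  rw [Real.norm_eq_abs, abs_of_nonneg (sq_nonneg _)]
  nlinarith [sq_nonneg (p.1+p.2)]

end Dom

lemma marg_fst (ha : 1 < a) (hr : 0 < r) (g : ℝ → ℝ) :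
    ∫ p : ℝ × ℝ, g p.1 ∂((gammaMeasure a r).prod (gammaMeasure a r))
      = ∫ t, g t ∂(gammaMeasure a r) := by
  haveI : IsProbabilityMeasure (gammaMeasure a r) := isProbabilityMeasure_gammaMeasure (by linarith) hr
  have := integral_prod_mul (μ := gammaMeasure a r) (ν := gammaMeasure a r) g (fun _ => (1:ℝ))
  simpa using this

lemma marg_snd (ha : 1 < a) (hr : 0 < r) (g : ℝ → ℝ) :
    ∫ p : ℝ × ℝ, g p.2 ∂((gammaMeasure a r).prod (gammaMeasure a r))
      = ∫ t, g t ∂(gammaMeasure a r) := by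
  haveI : IsProbabilityMeasure (gammaMeasure a r) := isProbabilityMeasure_gammaMeasure (by linarith) hr
  have := integral_prod_mul (μ := gammaMeasure a r) (ν := gammaMeasure a r) (fun _ => (1:ℝ)) g
  simpa using this

lemma mom_one (ha : 1 < a) (hr : 0 < r) :
    ∫ t, t ^ (1:ℕ) ∂(gammaMeasure a r) = a / r := by
  rw [moment_gamma ha hr 1]
  have hΓ : Gamma a ≠ 0 := ne_of_gt (Gamma_pos_of_pos (by linarith))
  rw [Nat.cast_one, Real.Gamma_add_one (by linarith)]
  field_simp

lemma mom_two (ha : 1 < a) (hr : 0 < r) :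
    ∫ t, t ^ (2:ℕ) ∂(gammaMeasure a r) = a * (a+1) / r^2 := by
  rw [moment_gamma ha hr 2]
  have hΓ : Gamma a ≠ 0 := ne_of_gt (Gamma_pos_of_pos (by linarith))
  rw [Nat.cast_ofNat, show a + (2:ℝ) = (a+1)+1 from by ring,
    Real.Gamma_add_one (by linarith), Real.Gamma_add_one (by linarith)]
  field_simp

lemma sq_moment (ha : 1 < a) (hr : 0 < r) (x : ℝ) :
    ∫ t, (t - x)^2 ∂(gammaMeasure a r)
      = a*(a+1)/r^2 - 2*x*(a/r) + x^2 := by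
  haveI : IsProbabilityMeasure (gammaMeasure a r) := isProbabilityMeasure_gammaMeasure (by linarith) hr
  have iA : Integrable (fun t : ℝ => t^2) (gammaMeasure a r) := integrable_pow_gamma ha hr 2
  have iB : Integrable (fun t : ℝ => (2*x)*t^1) (gammaMeasure a r) :=
    (integrable_pow_gamma ha hr 1).const_mul (2*x)
  have e : (fun t : ℝ => (t - x)^2) = fun t => (t^(2:ℕ) - (2*x)*t^(1:ℕ) + x^2) := by
    funext t; ring
  have iAB : Integrable (fun t : ℝ => t^(2:ℕ) - (2*x)*t^(1:ℕ)) (gammaMeasure a r) := by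
    exact iA.sub iB
  rw [e, integral_add iAB (integrable_const _), integral_sub iA iB,
    integral_const_mul, integral_const, mom_one ha hr, mom_two ha hr]
  simp [measure_univ]

lemma sub_sq_moment (ha : 1 < a) (hr : 0 < r) :
    ∫ p : ℝ × ℝ, (p.1 - p.2)^2 ∂((gammaMeasure a r).prod (gammaMeasure a r))
      = 2*a/r^2 := by
  haveI : IsProbabilityMeasure (gammaMeasure a r) := isProbabilityMeasure_gammaMeasure (by linarith) hr
  have i1 : Integrable (fun t : ℝ => t^(1:ℕ)) (gammaMeasure a r) := integrable_pow_gamma ha hr 1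
  have i2 : Integrable (fun t : ℝ => t^(2:ℕ)) (gammaMeasure a r) := integrable_pow_gamma ha hr 2
  have iA : Integrable (fun p : ℝ × ℝ => p.1^(2:ℕ))
      ((gammaMeasure a r).prod (gammaMeasure a r)) := by
    apply integrable_dom ha hr (continuous_fst.pow 2) 1
    intro p
    obtain ⟨b1, -, -, -, -, -⟩ := dom_facts p.1 p.2
    rw [Real.norm_eq_abs, abs_of_nonneg (sq_nonneg _), one_mul]
    exact b1
  have iB : Integrable (fun p : ℝ × ℝ => p.2^(2:ℕ))
      ((gammaMeasure a r).prod (gammaMeasure a r)) := by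
    apply integrable_dom ha hr (continuous_snd.pow 2) 1
    intro p
    obtain ⟨-, b2, -, -, -, -⟩ := dom_facts p.1 p.2
    rw [Real.norm_eq_abs, abs_of_nonneg (sq_nonneg _), one_mul]
    exact b2
  have iC : Integrable (fun p : ℝ × ℝ => (2:ℝ)*(p.1*p.2))
      ((gammaMeasure a r).prod (gammaMeasure a r)) := by
    apply Integrable.const_mul
    apply integrable_dom ha hr (continuous_fst.mul continuous_snd) 1
    intro p
    dsimp only [Pi.mul_apply, Pi.sub_apply, Pi.add_apply, Pi.pow_apply]
    obtain ⟨-, -, -, -, -, b6⟩ := dom_facts p.1 p.2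
    rw [Real.norm_eq_abs, abs_mul, one_mul]
    exact b6
  have e : (fun p : ℝ × ℝ => (p.1 - p.2)^2)
      = fun p => (p.1^(2:ℕ) + p.2^(2:ℕ) - (2:ℝ)*(p.1*p.2)) := by
    funext p; ring
  have iApB : Integrable (fun p : ℝ × ℝ => p.1^(2:ℕ) + p.2^(2:ℕ))
      ((gammaMeasure a r).prod (gammaMeasure a r)) := by exact iA.add iB
  rw [e, integral_sub iApB iC, integral_add iA iB, integral_const_mul]
  have hprod : ∫ p : ℝ × ℝ, p.1*p.2 ∂((gammaMeasure a r).prod (gammaMeasure a r))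
      = (a/r) * (a/r) := by
    have := integral_prod_mul (μ := gammaMeasure a r) (ν := gammaMeasure a r)
      (fun s => s) (fun t => t)
    rw [this]
    have h1 : ∫ t, t ∂(gammaMeasure a r) = a/r := by
      have := mom_one ha hr; simpa using this
    rw [h1]
  rw [hprod, marg_fst ha hr (fun t => t^(2:ℕ)), marg_snd ha hr (fun t => t^(2:ℕ)),
    mom_two ha hr]
  have hr' : r ≠ 0 := ne_of_gt hr
  field_simp
  ring


lemma gamma_Iic_zero (ha : 1 < a) (hr : 0 < r) : gammaMeasure a r (Iic (0:ℝ)) = 0 := by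
  rw [gammaMeasure, withDensity_apply _ measurableSet_Iic]
  have hz : ∀ t ∈ Iic (0:ℝ), gammaPDF a r t = 0 := by
    intro t ht
    rw [gammaPDF, pdf_zero_of_nonpos ha (mem_Iic.mp ht)]
    simp
  rw [setLIntegral_congr_fun_ae measurableSet_Iic (ae_of_all _ hz), lintegral_zero]

lemma ae_pos_prod (ha : 1 < a) (hr : 0 < r) :
    ∀ᵐ p : ℝ × ℝ ∂((gammaMeasure a r).prod (gammaMeasure a r)), 0 < p.1 ∧ 0 < p.2 := by
  haveI : IsProbabilityMeasure (gammaMeasure a r) := isProbabilityMeasure_gammaMeasure (by linarith) hr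
  rw [ae_iff]
  have hsub : {p : ℝ × ℝ | ¬(0 < p.1 ∧ 0 < p.2)}
      ⊆ (Iic (0:ℝ)) ×ˢ (univ : Set ℝ) ∪ (univ : Set ℝ) ×ˢ (Iic (0:ℝ)) := by
    intro p hp
    simp only [mem_setOf_eq, not_and_or, not_lt] at hp
    rcases hp with h | h
    · exact Or.inl (by simp [h])
    · exact Or.inr (by simp [h])
  have hz : ((gammaMeasure a r).prod (gammaMeasure a r))
      ((Iic (0:ℝ)) ×ˢ (univ : Set ℝ) ∪ (univ : Set ℝ) ×ˢ (Iic (0:ℝ))) = 0 := by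
    apply measure_union_null
    · rw [Measure.prod_prod, gamma_Iic_zero ha hr, zero_mul]
    · rw [Measure.prod_prod, gamma_Iic_zero ha hr, mul_zero]
  exact measure_mono_null hsub hz

lemma T_rel (ha : 1 < a) (hr : 0 < r) :
    ∫ p : ℝ × ℝ, |p.1 - p.2| * (p.1 + p.2) ∂((gammaMeasure a r).prod (gammaMeasure a r))
      = ((2*a+1)/r)
        * ∫ p : ℝ × ℝ, |p.1 - p.2| ∂((gammaMeasure a r).prod (gammaMeasure a r)) := by
  have ha0 : (0:ℝ) < a := by linarith
  have hΓ : (0:ℝ) < Gamma (2*a+1) := Gamma_pos_of_pos (by linarith)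
  have h1r : (0:ℝ) < 1/r := by positivity
  have hnn1 : 0 ≤ᵐ[(gammaMeasure a r).prod (gammaMeasure a r)]
      fun p : ℝ × ℝ => |p.1 - p.2| * (p.1 + p.2) := by
    filter_upwards [ae_pos_prod ha hr] with p hp
    have := hp.1; have := hp.2
    positivity
  have hnn0 : 0 ≤ᵐ[(gammaMeasure a r).prod (gammaMeasure a r)]
      fun p : ℝ × ℝ => |p.1 - p.2| := ae_of_all _ (fun p => abs_nonneg _)
  have e1 : ENNReal.ofReal (∫ p : ℝ × ℝ, |p.1 - p.2| * (p.1 + p.2)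
        ∂((gammaMeasure a r).prod (gammaMeasure a r)))
      = ∫⁻ p : ℝ × ℝ, ENNReal.ofReal (|p.1 - p.2| * (p.1 + p.2) ^ (1:ℕ))
        ∂((gammaMeasure a r).prod (gammaMeasure a r)) := by
    rw [ofReal_integral_eq_lintegral_ofReal (integrable_abs_mul_add ha hr) hnn1]
    exact lintegral_congr (fun p => by rw [pow_one])
  have e0 : ENNReal.ofReal (∫ p : ℝ × ℝ, |p.1 - p.2|
        ∂((gammaMeasure a r).prod (gammaMeasure a r)))
      = ∫⁻ p : ℝ × ℝ, ENNReal.ofReal (|p.1 - p.2| * (p.1 + p.2) ^ (0:ℕ))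
        ∂((gammaMeasure a r).prod (gammaMeasure a r)) := by
    rw [ofReal_integral_eq_lintegral_ofReal (integrable_abs_sub ha hr) hnn0]
    exact lintegral_congr (fun p => by rw [pow_zero, mul_one])
  have hV : ENNReal.ofReal ((1/r) ^ (2*a + ((1:ℕ):ℝ) + 1) * Gamma (2*a + ((1:ℕ):ℝ) + 1))
      = ENNReal.ofReal ((2*a+1)/r)
        * ENNReal.ofReal ((1/r) ^ (2*a + ((0:ℕ):ℝ) + 1) * Gamma (2*a + ((0:ℕ):ℝ) + 1)) := by
    rw [← ENNReal.ofReal_mul (by positivity)]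
    congr 1
    push_cast
    rw [show 2*a + 1 + 1 = (2*a+1) + 1 from by ring, Real.Gamma_add_one (by linarith),
      show 2*a + 0 + 1 = 2*a + 1 from by ring, rpow_add h1r, rpow_one]
    field_simp
  have key2 : ENNReal.ofReal (∫ p : ℝ × ℝ, |p.1 - p.2| * (p.1 + p.2)
        ∂((gammaMeasure a r).prod (gammaMeasure a r)))
      = ENNReal.ofReal ((2*a+1)/r)
        * ENNReal.ofReal (∫ p : ℝ × ℝ, |p.1 - p.2|
            ∂((gammaMeasure a r).prod (gammaMeasure a r))) := by
    rw [e1, e0, P_fact ha hr 1, P_fact ha hr 0, hV]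
    ring
  have key : ENNReal.ofReal (∫ p : ℝ × ℝ, |p.1 - p.2| * (p.1 + p.2)
        ∂((gammaMeasure a r).prod (gammaMeasure a r)))
      = ENNReal.ofReal (((2*a+1)/r)
          * ∫ p : ℝ × ℝ, |p.1 - p.2| ∂((gammaMeasure a r).prod (gammaMeasure a r))) := by
    rw [key2, ← ENNReal.ofReal_mul (by positivity)]
  have hI1 : 0 ≤ ∫ p : ℝ × ℝ, |p.1 - p.2| * (p.1 + p.2)
      ∂((gammaMeasure a r).prod (gammaMeasure a r)) := integral_nonneg_of_ae hnn1
  have hI0 : 0 ≤ ∫ p : ℝ × ℝ, |p.1 - p.2|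
      ∂((gammaMeasure a r).prod (gammaMeasure a r)) := integral_nonneg_of_ae hnn0
  have := (ENNReal.ofReal_eq_ofReal_iff hI1 (by positivity)).mp key
  exact this


end MinGamma


open MinGamma

set_option maxHeartbeats 2000000 in
/-- If, for each `b > 0`, `X b` and `Y b` are i.i.d. Gamma(shape `x/b + 1`, scale `b`)
random variables, then `E[(min{X,Y} − x)²] = bx + O_x(b^(3/2))` as `b → 0⁺`. -/
theorem min_gamma_kernel_second_moment_asymp {Ω : Type*} [MeasureSpace Ω]
    [IsProbabilityMeasure (ℙ : Measure Ω)]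
    (x : ℝ) (hx : 0 < x) (X Y : ℝ → Ω → ℝ)
    (hX : ∀ b, 0 < b → Measure.map (X b) ℙ = gammaMeasure (b⁻¹ * x + 1) b⁻¹)
    (hY : ∀ b, 0 < b → Measure.map (Y b) ℙ = gammaMeasure (b⁻¹ * x + 1) b⁻¹)
    (hindep : ∀ b, 0 < b → IndepFun (X b) (Y b) ℙ) :
    ∃ C b₀ : ℝ, 0 < C ∧ 0 < b₀ ∧ ∀ b, 0 < b → b < b₀ →
      |(∫ ω, (min (X b ω) (Y b ω) - x) ^ 2 ∂ℙ) - b * x| ≤ C * b ^ ((3 : ℝ) / 2) := by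
  refine ⟨2 + 3*Real.sqrt (x+1), 1, by positivity, one_pos, ?_⟩
  intro b hb hb1
  have hbne : b ≠ 0 := ne_of_gt hb
  have hr : (0:ℝ) < b⁻¹ := inv_pos.mpr hb
  have ha : 1 < b⁻¹ * x + 1 := by
    have : 0 < b⁻¹ * x := by positivity
    linarith
  haveI hprob : IsProbabilityMeasure (gammaMeasure (b⁻¹ * x + 1) b⁻¹) :=
    isProbabilityMeasure_gammaMeasure (by linarith) hr
  -- a.e.-measurability of X b and Y b
  have hXm : AEMeasurable (X b) ℙ := by
    by_contra hc
    have h1 := hX b hb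
    rw [Measure.map_of_not_aemeasurable hc] at h1
    have h2 := congrArg (fun μ : Measure ℝ => μ univ) h1
    simp only [Measure.coe_zero, Pi.zero_apply, measure_univ] at h2
    exact zero_ne_one h2
  have hYm : AEMeasurable (Y b) ℙ := by
    by_contra hc
    have h1 := hY b hb
    rw [Measure.map_of_not_aemeasurable hc] at h1
    have h2 := congrArg (fun μ : Measure ℝ => μ univ) h1
    simp only [Measure.coe_zero, Pi.zero_apply, measure_univ] at h2
    exact zero_ne_one h2
  -- the law of the pair
  have hmap : Measure.map (fun ω => (X b ω, Y b ω)) ℙ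
      = (gammaMeasure (b⁻¹ * x + 1) b⁻¹).prod (gammaMeasure (b⁻¹ * x + 1) b⁻¹) := by
    have h1 := (ProbabilityTheory.indepFun_iff_map_prod_eq_prod_map_map hXm hYm).mp
      (hindep b hb)
    rw [h1, hX b hb, hY b hb]
  -- transfer the integral to the product of Gamma measures
  have hgc : Continuous (fun p : ℝ × ℝ => (min p.1 p.2 - x)^2) :=
    ((continuous_fst.min continuous_snd).sub continuous_const).pow 2
  have hEq : ∫ ω, (min (X b ω) (Y b ω) - x) ^ 2 ∂ℙ
      = ∫ p : ℝ × ℝ, (min p.1 p.2 - x)^2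
          ∂((gammaMeasure (b⁻¹ * x + 1) b⁻¹).prod (gammaMeasure (b⁻¹ * x + 1) b⁻¹)) := by
    rw [← hmap, integral_map (hXm.prodMk hYm) hgc.aestronglyMeasurable]
  rw [hEq]
  set T0 : ℝ := ∫ p : ℝ × ℝ, |p.1 - p.2|
      ∂((gammaMeasure (b⁻¹ * x + 1) b⁻¹).prod (gammaMeasure (b⁻¹ * x + 1) b⁻¹)) with hT0def
  -- the main identity
  have hM2 : ∫ p : ℝ × ℝ, (p.1 - x)^2
      ∂((gammaMeasure (b⁻¹ * x + 1) b⁻¹).prod (gammaMeasure (b⁻¹ * x + 1) b⁻¹))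
        = b*x + 2*b^2 := by
    have h1 : ∫ p : ℝ × ℝ, (p.1 - x)^2
        ∂((gammaMeasure (b⁻¹ * x + 1) b⁻¹).prod (gammaMeasure (b⁻¹ * x + 1) b⁻¹))
        = ∫ t, (t - x)^2 ∂(gammaMeasure (b⁻¹ * x + 1) b⁻¹) :=
      marg_fst ha hr (fun t => (t - x)^2)
    rw [h1, sq_moment ha hr x]
    field_simp
    ring
  have hM2' : ∫ p : ℝ × ℝ, (p.2 - x)^2
      ∂((gammaMeasure (b⁻¹ * x + 1) b⁻¹).prod (gammaMeasure (b⁻¹ * x + 1) b⁻¹))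
        = b*x + 2*b^2 := by
    have h1 : ∫ p : ℝ × ℝ, (p.2 - x)^2
        ∂((gammaMeasure (b⁻¹ * x + 1) b⁻¹).prod (gammaMeasure (b⁻¹ * x + 1) b⁻¹))
        = ∫ t, (t - x)^2 ∂(gammaMeasure (b⁻¹ * x + 1) b⁻¹) :=
      marg_snd ha hr (fun t => (t - x)^2)
    rw [h1, sq_moment ha hr x]
    field_simp
    ring
  have hTrel : ∫ p : ℝ × ℝ, |p.1 - p.2| * (p.1 + p.2)
      ∂((gammaMeasure (b⁻¹ * x + 1) b⁻¹).prod (gammaMeasure (b⁻¹ * x + 1) b⁻¹))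
        = (2*x + 3*b) * T0 := by
    rw [T_rel ha hr, ← hT0def]
    congr 1
    field_simp
    ring
  have iI := integrable_sq_fst ha hr x
  have iJ := integrable_sq_snd ha hr x
  have iK := integrable_abs_mul_add ha hr
  have iL0 := integrable_abs_sub ha hr
  have iL : Integrable (fun p : ℝ × ℝ => 2*x*|p.1 - p.2|)
      ((gammaMeasure (b⁻¹ * x + 1) b⁻¹).prod (gammaMeasure (b⁻¹ * x + 1) b⁻¹)) :=
    iL0.const_mul (2*x)
  have i12 : Integrable (fun p : ℝ × ℝ => (p.1 - x)^2 + (p.2 - x)^2)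
      ((gammaMeasure (b⁻¹ * x + 1) b⁻¹).prod (gammaMeasure (b⁻¹ * x + 1) b⁻¹)) := by
    exact iI.add iJ
  have i123 : Integrable
      (fun p : ℝ × ℝ => (p.1 - x)^2 + (p.2 - x)^2 - |p.1 - p.2| * (p.1 + p.2))
      ((gammaMeasure (b⁻¹ * x + 1) b⁻¹).prod (gammaMeasure (b⁻¹ * x + 1) b⁻¹)) := by
    exact i12.sub iK
  have hJ : ∫ p : ℝ × ℝ, (min p.1 p.2 - x)^2
      ∂((gammaMeasure (b⁻¹ * x + 1) b⁻¹).prod (gammaMeasure (b⁻¹ * x + 1) b⁻¹))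
        = b*x + 2*b^2 - (3*b/2) * T0 := by
    have e : (fun p : ℝ × ℝ => (min p.1 p.2 - x)^2)
        = fun p : ℝ × ℝ => ((p.1 - x)^2 + (p.2 - x)^2 - |p.1 - p.2| * (p.1 + p.2)
            + 2*x*|p.1 - p.2|)/2 :=
      funext (fun p => min_id x p.1 p.2)
    rw [e, integral_div, integral_add i123 iL, integral_sub i12 iK, integral_add iI iJ,
      integral_const_mul, hM2, hM2', hTrel, ← hT0def]
    ring
  rw [hJ]
  -- the quantitative bound on T0
  have hT0nn : 0 ≤ T0 := integral_nonneg (fun p => abs_nonneg _)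
  have hSpos : (0:ℝ) < 2*b*x + 2*b^2 := by positivity
  set c : ℝ := Real.sqrt (2*b*x + 2*b^2) with hcdef
  have hcpos : 0 < c := Real.sqrt_pos.mpr hSpos
  have hcsq : c^2 = 2*b*x + 2*b^2 := Real.sq_sqrt hSpos.le
  have hT0le : T0 ≤ c := by
    have hpt : ∀ p : ℝ × ℝ, |p.1 - p.2| ≤ ((p.1 - p.2)^2 + c^2)/(2*c) := by
      intro p
      rw [le_div_iff₀ (by positivity)]
      nlinarith [sq_nonneg (|p.1 - p.2| - c), sq_abs (p.1 - p.2)]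
    have hint2 : Integrable (fun p : ℝ × ℝ => ((p.1 - p.2)^2 + c^2)/(2*c))
        ((gammaMeasure (b⁻¹ * x + 1) b⁻¹).prod (gammaMeasure (b⁻¹ * x + 1) b⁻¹)) :=
      ((integrable_sub_sq ha hr).add (integrable_const _)).div_const _
    have hmono := integral_mono iL0 hint2 hpt
    rw [integral_div, integral_add (integrable_sub_sq ha hr) (integrable_const _),
      integral_const, sub_sq_moment ha hr] at hmono
    have h2a : 2*(b⁻¹*x+1)/(b⁻¹)^2 = 2*b*x + 2*b^2 := by field_simp
    rw [h2a] at hmono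
    simp only [measure_univ, probReal_univ, ENNReal.toReal_one, smul_eq_mul, one_mul] at hmono
    calc T0 ≤ (2*b*x + 2*b^2 + c^2)/(2*c) := hmono
      _ = c := by rw [hcsq, ← hcsq]; field_simp; ring
  -- final numeric estimate
  have hb32 : b ^ ((3:ℝ)/2) = b * Real.sqrt b := by
    rw [show (3:ℝ)/2 = 1 + 1/2 by norm_num, Real.rpow_add hb, Real.rpow_one,
      Real.sqrt_eq_rpow]
  have hbsq : 2*b^2 ≤ 2*b^((3:ℝ)/2) := by
    have h1 : b^(2:ℕ) = b^((2:ℕ):ℝ) := (Real.rpow_natCast b 2).symm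
    have h2 : b^((3:ℝ)/2) ≥ b^(((2:ℕ)):ℝ) :=
      Real.rpow_le_rpow_of_exponent_ge hb hb1.le (by norm_num)
    rw [h1]
    linarith
  have hsplit : c = Real.sqrt b * Real.sqrt (2*x + 2*b) := by
    rw [hcdef, show 2*b*x + 2*b^2 = b*(2*x+2*b) by ring, Real.sqrt_mul hb.le]
  have hsq2 : Real.sqrt (2*x + 2*b) ≤ 2 * Real.sqrt (x+1) := by
    have h1 : Real.sqrt (2*x + 2*b) ≤ Real.sqrt (4*(x+1)) :=
      Real.sqrt_le_sqrt (by nlinarith)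
    have h2 : Real.sqrt (4*(x+1)) = 2 * Real.sqrt (x+1) := by
      rw [show (4:ℝ)*(x+1) = 2^2*(x+1) by norm_num, Real.sqrt_mul (by positivity),
        Real.sqrt_sq (by norm_num : (0:ℝ) ≤ 2)]
    linarith
  have hcb : (3*b/2) * c ≤ 3*Real.sqrt (x+1) * b^((3:ℝ)/2) := by
    have h0 : (0:ℝ) ≤ Real.sqrt b := Real.sqrt_nonneg b
    have h1 : (3*b/2) * c = (3*b/2) * (Real.sqrt b * Real.sqrt (2*x + 2*b)) := by
      rw [hsplit]
    have h2 : (3*b/2) * (Real.sqrt b * Real.sqrt (2*x + 2*b))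
        ≤ (3*b/2) * (Real.sqrt b * (2 * Real.sqrt (x+1))) := by
      apply mul_le_mul_of_nonneg_left _ (by positivity)
      exact mul_le_mul_of_nonneg_left hsq2 h0
    rw [h1, hb32]
    nlinarith [Real.sqrt_nonneg (x+1)]
  have hvnn : 0 ≤ (3*b/2) * T0 := by positivity
  have hvle : (3*b/2) * T0 ≤ 3*Real.sqrt (x+1) * b^((3:ℝ)/2) := by
    have := mul_le_mul_of_nonneg_left hT0le (by positivity : (0:ℝ) ≤ 3*b/2)
    linarith
  have hb32nn : 0 ≤ b^((3:ℝ)/2) := Real.rpow_nonneg hb.le _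
  rw [show b*x + 2*b^2 - (3*b/2) * T0 - b*x = 2*b^2 - (3*b/2) * T0 from by ring, abs_le]
  constructor
  · nlinarith [Real.sqrt_nonneg (x+1)]
  · nlinarith [Real.sqrt_nonneg (x+1)]
end
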